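/- arXiv:1504.07494 — 8 statements merged into one kernel-verified Lean document; each statement's English description precedes it below -/
import Mathlib

section
/- Let r be a prime power and let R = ℤ/rℤ. Let (a,b) and (c,d) be two distinct points of R² that are neighbors, i.e. (a−c, b−d) ∉ B. Then the number of distinct lines of R² (distinct as subsets of R²) containing both (a,b) and (c,d) equals r / o, where o is the order of the element (a−c, b−d) in the additive group R². -/
/-- `B` is the set of pairs `(u,v)` occurring as a row of some invertible `2 × 2`
matrix with entries in `R`. -/
def Bset (R : Type*) [CommRing R] : Set (R × R) :=
  {uv | ∃ M : Matrix (Fin 2) (Fin 2) R, IsUnit M.det ∧ ∃ i : Fin 2, M i 0 = uv.1 ∧ M i 1 = uv.2}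

/-- A line in `R²` is a subset of the form `{(a + ℓu, b + ℓv) : ℓ ∈ R}` for some
`(a,b) ∈ R²` and `(u,v) ∈ B`. -/
def IsLine {R : Type*} [CommRing R] (L : Set (R × R)) : Prop :=
  ∃ a b : R, ∃ uv : R × R, uv ∈ Bset R ∧
    L = {p | ∃ ℓ : R, p = (a + ℓ * uv.1, b + ℓ * uv.2)}

section Auxiliary

variable {p k : ℕ}

lemma zmod_pdvd_iff (hp : p.Prime) (hk : 0 < k) (x : ZMod (p^k)) :
    (p : ZMod (p^k)) ∣ x ↔ p ∣ x.val := by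
  haveI : NeZero (p^k) := ⟨(pow_pos hp.pos k).ne'⟩
  constructor
  · rintro ⟨t, rfl⟩
    have h1 : ((p * t.val : ℕ) : ZMod (p^k)) = ((((p:ZMod (p^k)) * t).val : ℕ) : ZMod (p^k)) := by
      push_cast
      rw [ZMod.natCast_zmod_val, ZMod.natCast_zmod_val]
    rw [ZMod.natCast_eq_natCast_iff] at h1
    have h2 : (↑(p^k) : ℤ) ∣ (((p:ZMod (p^k)) * t).val : ℤ) - (p * t.val : ℕ) := h1.dvd
    have h3 : (p:ℤ) ∣ (((p:ZMod (p^k)) * t).val : ℤ) := by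
      have hpk : (p:ℤ) ∣ ((p^k : ℕ) : ℤ) := by
        exact_mod_cast dvd_pow_self p hk.ne'
      have := hpk.trans h2
      have h4 : (p:ℤ) ∣ ((p * t.val : ℕ) : ℤ) := by push_cast; exact Dvd.intro _ rfl
      simpa using dvd_add this h4
    exact_mod_cast h3
  · intro h
    calc (p : ZMod (p^k)) ∣ (x.val : ZMod (p^k)) := by exact_mod_cast Nat.cast_dvd_cast h
    _ = x := ZMod.natCast_zmod_val x

lemma zmod_unit_iff (hp : p.Prime) (hk : 0 < k) (x : ZMod (p^k)) :
    IsUnit x ↔ ¬ (p : ZMod (p^k)) ∣ x := by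
  haveI : NeZero (p^k) := ⟨(pow_pos hp.pos k).ne'⟩
  rw [zmod_pdvd_iff hp hk]
  conv_lhs => rw [← ZMod.natCast_zmod_val x]
  rw [ZMod.isUnit_iff_coprime]
  rw [Nat.coprime_pow_right_iff hk, Nat.coprime_comm, hp.coprime_iff_not_dvd]


lemma mem_Bset_iff (hp : p.Prime) (hk : 0 < k) (uv : ZMod (p^k) × ZMod (p^k)) :
    uv ∈ Bset (ZMod (p^k)) ↔ (IsUnit uv.1 ∨ IsUnit uv.2) := by
  constructor
  · rintro ⟨M, hdet, i, h1, h2⟩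
    by_contra hcon
    push_neg at hcon
    obtain ⟨hu, hv⟩ := hcon
    rw [zmod_unit_iff hp hk, not_not] at hu hv
    rw [Matrix.det_fin_two] at hdet
    have hi : i = 0 ∨ i = 1 := by fin_cases i; exacts [Or.inl rfl, Or.inr rfl]
    rcases hi with rfl | rfl
    · rw [h1, h2] at hdet
      have : (p : ZMod (p^k)) ∣ uv.1 * M 1 1 - uv.2 * M 1 0 :=
        dvd_sub (hu.mul_right _) (hv.mul_right _)
      exact ((zmod_unit_iff hp hk _).mp hdet) this
    · rw [h1, h2] at hdet
      have : (p : ZMod (p^k)) ∣ M 0 0 * uv.2 - M 0 1 * uv.1 :=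
        dvd_sub (hv.mul_left _) (hu.mul_left _)
      exact ((zmod_unit_iff hp hk _).mp hdet) this
  · rintro (h | h)
    · exact ⟨!![uv.1, uv.2; 0, 1], by simpa [Matrix.det_fin_two_of] using h, 0, by simp, by simp⟩
    · refine ⟨!![uv.1, uv.2; 1, 0], ?_, 0, by simp, by simp⟩
      simp only [Matrix.det_fin_two_of]
      simpa using h.neg

lemma cast_gcd_dvd (x : ZMod (p^k)) (h0 : p^k ≠ 0) :
    x ∣ (((p^k).gcd x.val : ℕ) : ZMod (p^k)) := by
  haveI : NeZero (p^k) := ⟨h0⟩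
  have h := Nat.gcd_eq_gcd_ab (p^k) x.val
  have h2 : (((p^k).gcd x.val : ℕ) : ZMod (p^k)) = x * ((Nat.gcdB (p^k) x.val : ℤ) : ZMod (p^k)) := by
    have hthis := congrArg (fun z : ℤ => (z : ZMod (p^k))) h
    push_cast at hthis
    have hz : ((p : ZMod (p^k)))^k = 0 := by rw [← Nat.cast_pow, ZMod.natCast_self]
    rw [hz, ZMod.natCast_zmod_val] at hthis
    simpa using hthis
  exact ⟨_, h2⟩

lemma dvd_cast_gcd (x : ZMod (p^k)) (h0 : p^k ≠ 0) :
    (((p^k).gcd x.val : ℕ) : ZMod (p^k)) ∣ x := by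
  haveI : NeZero (p^k) := ⟨h0⟩
  conv_rhs => rw [← ZMod.natCast_zmod_val x]
  exact Nat.cast_dvd_cast (Nat.gcd_dvd_right _ _)


lemma ann_iff (hp : p.Prime) {s : ℕ} (hsk : s ≤ k) {x : ZMod (p^k)}
    (hs : (p^k).gcd x.val = p^s) (y : ZMod (p^k)) :
    x * y = 0 ↔ (p : ZMod (p^k))^(k-s) ∣ y := by
  have h0 : p^k ≠ 0 := (pow_pos hp.pos k).ne'
  haveI : NeZero (p^k) := ⟨h0⟩
  have hd1 : x ∣ (p : ZMod (p^k))^s := by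
    have := cast_gcd_dvd x h0; rwa [hs, Nat.cast_pow] at this
  have hd2 : (p : ZMod (p^k))^s ∣ x := by
    have := dvd_cast_gcd x h0; rwa [hs, Nat.cast_pow] at this
  have hps : (p : ZMod (p^k))^s * (p : ZMod (p^k))^(k-s) = 0 := by
    rw [← pow_add, Nat.add_sub_cancel' hsk, ← Nat.cast_pow, ZMod.natCast_self]
  constructor
  · intro h
    obtain ⟨t, ht⟩ := hd1
    have h1 : (p : ZMod (p^k))^s * y = 0 := by
      rw [ht]; linear_combination t * h
    have h2 : ((p^s * y.val : ℕ) : ZMod (p^k)) = 0 := by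
      push_cast
      rw [ZMod.natCast_zmod_val]
      exact h1
    rw [ZMod.natCast_eq_zero_iff] at h2
    have h3 : p^s * p^(k-s) ∣ p^s * y.val := by
      rwa [← pow_add, Nat.add_sub_cancel' hsk]
    have h4 : p^(k-s) ∣ y.val := (mul_dvd_mul_iff_left (pow_pos hp.pos s).ne').mp h3
    have h5 : ((p^(k-s) : ℕ) : ZMod (p^k)) ∣ (y.val : ZMod (p^k)) := Nat.cast_dvd_cast h4
    rwa [Nat.cast_pow, ZMod.natCast_zmod_val] at h5
  · rintro ⟨z, rfl⟩
    obtain ⟨e, he⟩ := hd2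
    rw [he]
    linear_combination e * z * hps

lemma order_eq (hp : p.Prime) {s : ℕ} (hsk : s ≤ k) {x : ZMod (p^k)}
    (hs : (p^k).gcd x.val = p^s) : addOrderOf x = p^(k-s) := by
  have h0 : p^k ≠ 0 := (pow_pos hp.pos k).ne'
  haveI : NeZero (p^k) := ⟨h0⟩
  conv_lhs => rw [← ZMod.natCast_zmod_val x]
  rw [ZMod.addOrderOf_coe _ h0, hs, Nat.pow_div hsk hp.pos]


lemma count_main (hp : p.Prime) (hk : 0 < k) (a b c d : ZMod (p^k))
    (hq : ∃ q, b - d = q * (a - c))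
    (hw1 : a - c ≠ 0) :
    Set.ncard {L : Set (ZMod (p^k) × ZMod (p^k)) | IsLine L ∧ (a, b) ∈ L ∧ (c, d) ∈ L} =
      p^k / addOrderOf ((a - c, b - d) : ZMod (p^k) × ZMod (p^k)) := by
  have h0 : p^k ≠ 0 := (pow_pos hp.pos k).ne'
  haveI : NeZero (p^k) := ⟨h0⟩
  obtain ⟨q, hqq⟩ := hq
  set w1 := a - c with hw1def
  set w2 := b - d with hw2def
  obtain ⟨s, hsk, hs⟩ := (Nat.dvd_prime_pow hp).mp (Nat.gcd_dvd_left (p^k) w1.val)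
  haveI : NeZero (p^s) := ⟨(pow_pos hp.pos s).ne'⟩
  -- s < k
  have hslt : s < k := by
    by_contra hcon
    have hsk2 : s = k := le_antisymm hsk (not_lt.mp hcon)
    apply hw1
    rw [hsk2] at hs
    have hdv : p^k ∣ w1.val := by
      have h2 := Nat.gcd_dvd_right (p^k) w1.val
      rwa [hs] at h2
    exact (ZMod.val_eq_zero w1).mp (Nat.eq_zero_of_dvd_of_lt hdv (ZMod.val_lt w1))
  have hordw1 : addOrderOf w1 = p^(k-s) := order_eq hp hsk hs
  have hann : ∀ y : ZMod (p^k), w1 * y = 0 ↔ (p : ZMod (p^k))^(k-s) ∣ y := ann_iff hp hsk hs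
  set O : ZMod (p^k) := (p : ZMod (p^k))^(k-s) with hOdef
  have hwO : w1 * O = 0 := (hann O).mpr dvd_rfl
  have hOps : O * ((p^s : ℕ) : ZMod (p^k)) = 0 := by
    rw [hOdef, Nat.cast_pow, ← pow_add, Nat.sub_add_cancel hsk, ← Nat.cast_pow,
      ZMod.natCast_self]
  -- additive order of the pair
  have hOw1 : (p^(k-s)) • w1 = 0 := hordw1 ▸ addOrderOf_nsmul_eq_zero w1
  have hord : addOrderOf ((w1, w2) : ZMod (p^k) × ZMod (p^k)) = p^(k-s) := by
    apply Nat.dvd_antisymm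
    · apply addOrderOf_dvd_of_nsmul_eq_zero
      have h2 : (p^(k-s)) • w2 = 0 := by
        rw [nsmul_eq_mul] at hOw1 ⊢
        rw [hqq]
        linear_combination q * hOw1
      show ((p^(k-s)) • w1, (p^(k-s)) • w2) = (0, 0)
      rw [hOw1, h2]
    · rw [← hordw1]
      apply addOrderOf_dvd_of_nsmul_eq_zero
      have := addOrderOf_nsmul_eq_zero ((w1, w2) : ZMod (p^k) × ZMod (p^k))
      exact congrArg Prod.fst this
  rw [hord]
  have hrhs : p^k / p^(k-s) = p^s := by
    rw [Nat.pow_div (Nat.sub_le k s) hp.pos, Nat.sub_sub_self hsk]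
  rw [hrhs]
  -- the parametrization
  set z : ZMod (p^s) → ZMod (p^k) := fun m => q + O * ((m.val : ℕ) : ZMod (p^k)) with hzdef
  set F : ZMod (p^s) → Set (ZMod (p^k) × ZMod (p^k)) :=
    fun m => {pt | ∃ ℓ : ZMod (p^k), pt = (a + ℓ * 1, b + ℓ * z m)} with hFdef
  have hOmod : ∀ t : ZMod (p^k), O * ((((t.val : ZMod (p^s))).val : ℕ) : ZMod (p^k)) = O * t := by
    intro t
    have hvv : ((t.val : ZMod (p^s))).val = t.val % (p^s) := ZMod.val_natCast _ _
    conv_rhs => rw [← ZMod.natCast_zmod_val t, ← Nat.div_add_mod t.val (p^s)]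
    rw [hvv]
    push_cast
    push_cast at hOps
    linear_combination (-((t.val / p^s : ℕ) : ZMod (p^k))) * hOps
  -- injectivity of F
  have hFinj : Function.Injective F := by
    intro m m' hFmm
    have hmem : ((a + 1 * 1, b + 1 * z m) : ZMod (p^k) × ZMod (p^k)) ∈ F m := ⟨1, rfl⟩
    rw [hFmm] at hmem
    obtain ⟨ℓ, hℓ⟩ := hmem
    rw [Prod.mk.injEq] at hℓ
    have hℓ1 : ℓ = 1 := by
      have := hℓ.1
      rw [mul_one, mul_one] at this
      exact (add_left_cancel this).symm
    subst hℓ1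
    have hzz : z m = z m' := by
      have := hℓ.2
      rw [one_mul, one_mul] at this
      exact add_left_cancel this
    rw [hzdef] at hzz
    simp only [add_right_inj] at hzz
    -- O * ↑m.val = O * ↑m'.val
    have hcast : ((p^(k-s) * m.val : ℕ) : ZMod (p^k)) = ((p^(k-s) * m'.val : ℕ) : ZMod (p^k)) := by
      rw [hOdef] at hzz
      push_cast
      exact hzz
    rw [ZMod.natCast_eq_natCast_iff] at hcast
    have hmod : p^(k-s) * m.val ≡ p^(k-s) * m'.val [MOD p^(k-s) * p^s] := by
      rwa [← pow_add, Nat.sub_add_cancel hsk]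
    have := Nat.ModEq.mul_left_cancel' (pow_pos hp.pos (k-s)).ne' hmod
    have hvals : ((m.val : ℕ) : ZMod (p^s)) = ((m'.val : ℕ) : ZMod (p^s)) :=
      (ZMod.natCast_eq_natCast_iff _ _ _).mpr this
    rwa [ZMod.natCast_zmod_val, ZMod.natCast_zmod_val] at hvals
  -- the set of lines equals the range of F
  have hset : {L : Set (ZMod (p^k) × ZMod (p^k)) | IsLine L ∧ (a, b) ∈ L ∧ (c, d) ∈ L}
      = Set.range F := by
    ext L
    constructor
    · rintro ⟨⟨x, y, uv, huv, rfl⟩, hab, hcd⟩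
      obtain ⟨ℓ₀, hℓ₀⟩ := hab
      obtain ⟨ℓ₁, hℓ₁⟩ := hcd
      rw [Prod.mk.injEq] at hℓ₀ hℓ₁
      have key : w1 * uv.2 = w2 * uv.1 := by
        have ha : w1 = (ℓ₀ - ℓ₁) * uv.1 := by
          rw [hw1def, hℓ₀.1, hℓ₁.1]; ring
        have hb : w2 = (ℓ₀ - ℓ₁) * uv.2 := by
          rw [hw2def, hℓ₀.2, hℓ₁.2]; ring
        rw [ha, hb]; ring
      have hvq : O ∣ uv.2 - q * uv.1 := by
        rw [← hann]
        linear_combination key + uv.1 * hqq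
      obtain ⟨t, ht⟩ := hvq
      have hu : IsUnit uv.1 := by
        rcases (mem_Bset_iff hp hk uv).mp huv with h | h
        · exact h
        · by_contra hcu
          rw [zmod_unit_iff hp hk] at hcu h
          rw [not_not] at hcu
          apply h
          have hpO : (p : ZMod (p^k)) ∣ O := by
            rw [hOdef]
            exact dvd_pow_self _ (Nat.sub_ne_zero_of_lt hslt)
          have : uv.2 = q * uv.1 + O * t := by linear_combination ht
          rw [this]
          exact dvd_add (Dvd.dvd.mul_left hcu q) ((hpO.mul_right t))
      obtain ⟨ui, hui⟩ := hu.exists_right_inv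
      set t' := t * ui with ht'def
      have hvui : uv.2 * ui = q + O * t' := by
        have : uv.2 = q * uv.1 + O * t := by linear_combination ht
        rw [this, ht'def]
        have : uv.1 * ui = 1 := hui
        linear_combination q * this
      refine ⟨((t'.val : ℕ) : ZMod (p^s)), ?_⟩
      have hzm : z ((t'.val : ℕ) : ZMod (p^s)) = uv.2 * ui := by
        rw [hzdef]
        simp only
        rw [hOmod t', hvui]
      -- F m = L
      ext pt
      constructor
      · rintro ⟨ℓ, rfl⟩
        refine ⟨ℓ₀ + ℓ * ui, ?_⟩
        rw [Prod.mk.injEq]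
        constructor
        · rw [hℓ₀.1]; rw [mul_one]
          have : uv.1 * ui = 1 := hui
          linear_combination (-ℓ) * this
        · rw [hℓ₀.2, hzm]
          ring
      · rintro ⟨ℓ, rfl⟩
        refine ⟨(ℓ - ℓ₀) * uv.1, ?_⟩
        rw [Prod.mk.injEq]
        constructor
        · rw [mul_one, hℓ₀.1]; ring
        · rw [hzm, hℓ₀.2]
          have : uv.1 * ui = 1 := hui
          linear_combination (-(ℓ - ℓ₀)) * uv.2 * this
    · rintro ⟨m, rfl⟩
      refine ⟨⟨a, b, ((1 : ZMod (p^k)), z m), ?_, rfl⟩, ⟨0, by rw [Prod.mk.injEq]; constructor <;> ring⟩, ?_⟩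
      · rw [mem_Bset_iff hp hk]
        exact Or.inl isUnit_one
      · refine ⟨c - a, ?_⟩
        rw [Prod.mk.injEq]
        constructor
        · ring
        · rw [hzdef]
          simp only
          have h2 : w1 * (O * ((m.val : ℕ) : ZMod (p^k))) = 0 := by
            rw [← mul_assoc, hwO, zero_mul]
          rw [hw1def] at h2
          rw [hw2def] at hqq
          linear_combination -hqq + h2
  rw [hset, ← Set.image_univ, Set.ncard_image_of_injective _ hFinj, Set.ncard_univ, Nat.card_zmod]


lemma isLine_swap (hp : p.Prime) (hk : 0 < k) {L : Set (ZMod (p^k) × ZMod (p^k))}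
    (hL : IsLine L) : IsLine (Prod.swap '' L) := by
  obtain ⟨x, y, uv, huv, rfl⟩ := hL
  refine ⟨y, x, (uv.2, uv.1), ?_, ?_⟩
  · rw [mem_Bset_iff hp hk] at huv ⊢
    exact huv.symm
  · ext pt
    constructor
    · rintro ⟨pt', ⟨ℓ, rfl⟩, rfl⟩
      exact ⟨ℓ, rfl⟩
    · rintro ⟨ℓ, rfl⟩
      exact ⟨(x + ℓ * uv.1, y + ℓ * uv.2), ⟨ℓ, rfl⟩, rfl⟩

end Auxiliary

/-- If `r` is a prime power and `(a,b)`, `(c,d)` are distinct neighboring points of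
`(ℤ/rℤ)²`, then the number of distinct lines containing both points is
`r / o((a-c, b-d))`, where `o` denotes the additive order. -/
theorem lines_through_neighbors (r : ℕ) (hr : IsPrimePow r)
    (a b c d : ZMod r)
    (hne : (a, b) ≠ (c, d))
    (hnbr : (a - c, b - d) ∉ Bset (ZMod r)) :
    Set.ncard {L : Set (ZMod r × ZMod r) | IsLine L ∧ (a, b) ∈ L ∧ (c, d) ∈ L} =
      r / addOrderOf ((a - c, b - d) : ZMod r × ZMod r) := by
  obtain ⟨p, k, hpp, hk, rfl⟩ := hr
  have hp : p.Prime := Nat.prime_iff.mpr hpp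
  have h0 : p^k ≠ 0 := (pow_pos hp.pos k).ne'
  haveI : NeZero (p^k) := ⟨h0⟩
  have hne' : (a - c, b - d) ≠ ((0 : ZMod (p^k)), (0 : ZMod (p^k))) := by
    intro h
    rw [Prod.mk.injEq] at h
    exact hne (Prod.ext (sub_eq_zero.mp h.1) (sub_eq_zero.mp h.2))
  -- the two coordinates are comparable under divisibility
  obtain ⟨s1, hs1k, hs1⟩ := (Nat.dvd_prime_pow hp).mp (Nat.gcd_dvd_left (p^k) (a-c).val)
  obtain ⟨s2, hs2k, hs2⟩ := (Nat.dvd_prime_pow hp).mp (Nat.gcd_dvd_left (p^k) (b-d).val)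
  have hg1 : (a - c) ∣ (((p^s1 : ℕ) : ZMod (p^k))) := by
    have := cast_gcd_dvd (a-c) h0; rwa [hs1] at this
  have hg1' : (((p^s1 : ℕ) : ZMod (p^k))) ∣ (a - c) := by
    have := dvd_cast_gcd (a-c) h0; rwa [hs1] at this
  have hg2 : (b - d) ∣ (((p^s2 : ℕ) : ZMod (p^k))) := by
    have := cast_gcd_dvd (b-d) h0; rwa [hs2] at this
  have hg2' : (((p^s2 : ℕ) : ZMod (p^k))) ∣ (b - d) := by
    have := dvd_cast_gcd (b-d) h0; rwa [hs2] at this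
  rcases le_total s1 s2 with hcase | hcase
  · -- (a-c) ∣ (b-d)
    have hdvd : (a - c) ∣ (b - d) :=
      (hg1.trans (Nat.cast_dvd_cast (pow_dvd_pow p hcase))).trans hg2'
    have hw1 : a - c ≠ 0 := by
      intro h
      rw [h] at hdvd
      exact hne' (Prod.ext h (zero_dvd_iff.mp hdvd))
    obtain ⟨q, hqv⟩ := hdvd
    exact count_main hp hk a b c d ⟨q, by rw [hqv]; ring⟩ hw1
  · -- (b-d) ∣ (a-c) : use symmetry
    have hdvd : (b - d) ∣ (a - c) :=
      (hg2.trans (Nat.cast_dvd_cast (pow_dvd_pow p hcase))).trans hg1'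
    have hw2 : b - d ≠ 0 := by
      intro h
      rw [h] at hdvd
      exact hne' (Prod.ext (zero_dvd_iff.mp hdvd) h)
    obtain ⟨q, hqv⟩ := hdvd
    have hswap := count_main hp hk b a d c ⟨q, by rw [hqv]; ring⟩ hw2
    have hord : addOrderOf ((a - c, b - d) : ZMod (p^k) × ZMod (p^k))
        = addOrderOf ((b - d, a - c) : ZMod (p^k) × ZMod (p^k)) := by
      have := addOrderOf_injective
        (AddEquiv.prodComm : (ZMod (p^k) × ZMod (p^k)) ≃+ (ZMod (p^k) × ZMod (p^k))).toAddMonoidHom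
        (AddEquiv.prodComm.injective) ((a - c, b - d) : ZMod (p^k) × ZMod (p^k))
      simpa using this.symm
    have hsets : {L : Set (ZMod (p^k) × ZMod (p^k)) | IsLine L ∧ (a, b) ∈ L ∧ (c, d) ∈ L}
        = (fun L => Prod.swap '' L) ''
          {L : Set (ZMod (p^k) × ZMod (p^k)) | IsLine L ∧ (b, a) ∈ L ∧ (d, c) ∈ L} := by
      ext L
      constructor
      · rintro ⟨hL, hab, hcd⟩
        refine ⟨Prod.swap '' L, ⟨isLine_swap hp hk hL, ⟨(a, b), hab, rfl⟩, ⟨(c, d), hcd, rfl⟩⟩, ?_⟩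
        show Prod.swap '' (Prod.swap '' L) = L
        rw [Set.image_image]
        simp
      · rintro ⟨L', ⟨hL', hba, hdc⟩, rfl⟩
        exact ⟨isLine_swap hp hk hL', ⟨(b, a), hba, rfl⟩, ⟨(d, c), hdc, rfl⟩⟩
    rw [hsets, Set.ncard_image_of_injective _ (Set.image_injective.mpr Prod.swap_injective),
      hswap, hord]
end

section
/- Let q be a prime power and let S ⊆ {0, 1, …, q−2}² be a set of exponent vectors. Suppose S contains two elements e = (e₁,e₂) and e' = (e₁',e₂') and there are an integer N ≥ 1 dividing q − 1 and a pair (u,v) ∈ B over ℤ/(q−1)ℤ such that (e₁ − e₁', e₂ − e₂') ≡ N·(u,v) (mod q−1). Then the minimum distance of the generalized toric code C_S(𝔽_q) satisfies d(C_S(𝔽_q)) ≤ (q−1)² − N(q−1); concretely, there is a nonzero 𝔽_q-linear combination of the monomials x^{s₁}y^{s₂}, (s₁,s₂) ∈ S, that vanishes at at least N(q−1) points of (𝔽_q^×)². -/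
/-- Let `q` be a prime power, `F` a field with `q` elements, and
`S ⊆ {0,…,q-2}²` a set of exponent vectors containing two elements `e ≠ e'` whose
difference is congruent mod `q - 1` to `N·(u,v)` for some divisor `N ≥ 1` of `q - 1`
and some `(u,v) ∈ B` over `ℤ/(q-1)ℤ`.  Then the generalized toric code `C_S(F)` has a
nonzero codeword vanishing at at least `N(q-1)` points of the torus; in particular its
minimum distance is at most `(q-1)² - N(q-1)`. -/
theorem toric_code_min_dist_le (q N : ℕ) (hq : IsPrimePow q)
    (hN : 1 ≤ N) (hNdvd : N ∣ q - 1)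
    (F : Type) [Field F] [Fintype F] (hF : Fintype.card F = q)
    (S : Finset (ℕ × ℕ)) (hS : ∀ s ∈ S, s.1 ≤ q - 2 ∧ s.2 ≤ q - 2)
    (e e' : ℕ × ℕ) (he : e ∈ S) (he' : e' ∈ S) (hee' : e ≠ e')
    (u v : ZMod (q - 1)) (huv : ((u, v) : ZMod (q - 1) × ZMod (q - 1)) ∈ Bset (ZMod (q - 1)))
    (hdiff1 : (e.1 : ZMod (q - 1)) - (e'.1 : ZMod (q - 1)) = (N : ZMod (q - 1)) * u)
    (hdiff2 : (e.2 : ZMod (q - 1)) - (e'.2 : ZMod (q - 1)) = (N : ZMod (q - 1)) * v) :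
    ∃ w : Fˣ × Fˣ → F,
      (∃ c : ℕ × ℕ → F,
        ∀ p : Fˣ × Fˣ, w p = ∑ s ∈ S, c s * (p.1 : F) ^ s.1 * (p.2 : F) ^ s.2) ∧
      w ≠ 0 ∧
      N * (q - 1) ≤ Nat.card {p : Fˣ × Fˣ // w p = 0} ∧
      Nat.card {p : Fˣ × Fˣ // w p ≠ 0} ≤ (q - 1) ^ 2 - N * (q - 1) := by
  classical
  have hq2 : 2 ≤ q := hq.two_le
  have hn : 0 < (q-1) := by omega
  haveI : NeZero (q-1) := ⟨hn.ne'⟩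
  have hcard : Fintype.card Fˣ = (q-1) := by rw [Fintype.card_units, hF]
  obtain ⟨g, hg⟩ := IsCyclic.exists_generator (α := Fˣ)
  have hog : orderOf g = (q-1) := by
    rw [orderOf_eq_card_of_forall_mem_zpowers hg, Nat.card_eq_fintype_card, hcard]
  have hgn : g ^ (q-1) = 1 := by rw [← hog]; exact pow_orderOf_eq_one g
  -- powers depend only on the exponent mod (q-1)
  have hmod : ∀ a : ℕ, g ^ a = g ^ (a % (q-1)) := by
    intro a
    conv_lhs => rw [← Nat.div_add_mod a (q-1)]
    rw [pow_add, pow_mul, hgn, one_pow, one_mul]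
  -- the map ψ : ZMod (q-1) → Fˣ
  set ψ : ZMod (q-1) → Fˣ := fun r => g ^ r.val with hψ_def
  have hψadd : ∀ r s : ZMod (q-1), ψ r * ψ s = ψ (r + s) := by
    intro r s
    simp only [hψ_def, ← pow_add, ZMod.val_add, ← hmod]
  have hψmul : ∀ (r : ZMod (q-1)) (k : ℕ), (ψ r) ^ k = ψ (r * (k : ZMod (q-1))) := by
    intro r k
    simp only [hψ_def, ← pow_mul]
    rw [ZMod.val_mul, ← hmod, ZMod.val_natCast, hmod (r.val * k), hmod (r.val * (k % (q-1)))]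
    congr 1
    conv_rhs => rw [Nat.mul_mod, Nat.mod_mod_of_dvd _ (dvd_refl (q-1)), ← Nat.mul_mod]
  have hψinj : Function.Injective ψ := by
    intro r s h
    have h1 : r.val < orderOf g := by rw [hog]; exact ZMod.val_lt r
    have h2 : s.val < orderOf g := by rw [hog]; exact ZMod.val_lt s
    have := pow_injOn_Iio_orderOf (x := g) h1 h2 h
    exact ZMod.val_injective (q-1) this
  have hψsurj : Function.Surjective ψ := by
    intro x
    have hx : x ∈ Subgroup.zpowers g := hg x
    have hfin : IsOfFinOrder g := isOfFinOrder_of_finite g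
    rw [← hfin.mem_powers_iff_mem_zpowers] at hx
    obtain ⟨k, hk⟩ := hx
    exact ⟨(k : ZMod (q-1)), by simp only [hψ_def, ZMod.val_natCast, ← hmod]; exact hk⟩
  set ψe : ZMod (q-1) ≃ Fˣ := Equiv.ofBijective ψ ⟨hψinj, hψsurj⟩ with hψe_def
  -- the codeword
  set w : Fˣ × Fˣ → F := fun p =>
    ((p.1 ^ e.1 * p.2 ^ e.2 : Fˣ) : F) - ((p.1 ^ e'.1 * p.2 ^ e'.2 : Fˣ) : F) with hw_def
  set c : ℕ × ℕ → F := fun s => if s = e then 1 else if s = e' then -1 else 0 with hc_def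
  have hsum : ∀ p : Fˣ × Fˣ, w p = ∑ s ∈ S, c s * (p.1 : F) ^ s.1 * (p.2 : F) ^ s.2 := by
    intro p
    have hsub : ({e, e'} : Finset (ℕ × ℕ)) ⊆ S := by
      intro s hs
      rcases Finset.mem_insert.1 hs with h | h
      · exact h ▸ he
      · exact (Finset.mem_singleton.1 h) ▸ he'
    rw [← Finset.sum_subset hsub]
    · rw [Finset.sum_pair hee']
      simp only [hc_def, if_pos rfl, if_neg (Ne.symm hee'), hw_def]
      push_cast
      ring
    · intro s _ hs
      have h1 : s ≠ e := fun h => hs (by simp [h])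
      have h2 : s ≠ e' := fun h => hs (by simp [h])
      simp [hc_def, h1, h2]
  -- casts of the exponents
  set E1 : ZMod (q-1) := (e.1 : ZMod (q-1))
  set E2 : ZMod (q-1) := (e.2 : ZMod (q-1))
  set E1' : ZMod (q-1) := (e'.1 : ZMod (q-1))
  set E2' : ZMod (q-1) := (e'.2 : ZMod (q-1))
  -- key equivalence
  have hkey : ∀ a b : ZMod (q-1), (w (ψe a, ψe b) = 0 ↔ E1 * a + E2 * b = E1' * a + E2' * b) := by
    intro a b
    have h1 : (ψe a) ^ e.1 * (ψe b) ^ e.2 = ψ (a * E1 + b * E2) := by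
      show (ψ a) ^ e.1 * (ψ b) ^ e.2 = _
      rw [hψmul, hψmul, hψadd]
    have h2 : (ψe a) ^ e'.1 * (ψe b) ^ e'.2 = ψ (a * E1' + b * E2') := by
      show (ψ a) ^ e'.1 * (ψ b) ^ e'.2 = _
      rw [hψmul, hψmul, hψadd]
    constructor
    · intro h
      have h0 : ((ψe a) ^ e.1 * (ψe b) ^ e.2 : Fˣ) = ((ψe a) ^ e'.1 * (ψe b) ^ e'.2 : Fˣ) := by
        apply Units.ext
        have := sub_eq_zero.1 h
        exact_mod_cast this
      rw [h1, h2] at h0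
      have := hψinj h0
      rw [mul_comm a E1, mul_comm b E2, mul_comm a E1', mul_comm b E2'] at this
      exact this
    · intro h
      have h0 : ψ (a * E1 + b * E2) = ψ (a * E1' + b * E2') := by
        congr 1
        rw [mul_comm a E1, mul_comm b E2, mul_comm a E1', mul_comm b E2']
        exact h
      rw [← h1, ← h2] at h0
      simp only [hw_def]
      rw [sub_eq_zero]
      exact_mod_cast congrArg (Units.val) h0
  -- simplify to the N·(u·a+v·b) = 0 form
  have hkey2 : ∀ a b : ZMod (q-1), (w (ψe a, ψe b) = 0 ↔ (N : ZMod (q-1)) * (u * a + v * b) = 0) := by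
    intro a b
    rw [hkey a b]
    constructor
    · intro h
      have : (E1 - E1') * a + (E2 - E2') * b = 0 := by ring_nf; ring_nf at h; linear_combination h
      rw [hdiff1, hdiff2] at this
      linear_combination this
    · intro h
      have : (E1 - E1') * a + (E2 - E2') * b = 0 := by
        rw [hdiff1, hdiff2]
        linear_combination h
      linear_combination this
  -- w ≠ 0
  have hwne : w ≠ 0 := by
    intro hcontr
    have hA : E1 = E1' := by
      have := (hkey 1 0).1 (by rw [hcontr]; rfl)
      simpa using this
    have hB : E2 = E2' := by
      have := (hkey 0 1).1 (by rw [hcontr]; rfl)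
      simpa using this
    apply hee'
    have he1 : e.1 < (q-1) := by have := (hS e he).1; omega
    have he2 : e.2 < (q-1) := by have := (hS e he).2; omega
    have he1' : e'.1 < (q-1) := by have := (hS e' he').1; omega
    have he2' : e'.2 < (q-1) := by have := (hS e' he').2; omega
    have h1 : e.1 = e'.1 := by
      have := congrArg ZMod.val hA
      rwa [ZMod.val_cast_of_lt he1, ZMod.val_cast_of_lt he1'] at this
    have h2 : e.2 = e'.2 := by
      have := congrArg ZMod.val hB
      rwa [ZMod.val_cast_of_lt he2, ZMod.val_cast_of_lt he2'] at this
    exact Prod.ext h1 h2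
  -- counting the zeros
  obtain ⟨M, hMdet, i, hMi0, hMi1⟩ := huv
  -- the equiv given by M
  have hMinv : M⁻¹ * M = 1 := Matrix.nonsing_inv_mul M hMdet
  have hMinv' : M * M⁻¹ = 1 := Matrix.mul_nonsing_inv M hMdet
  let Mequiv : (Fin 2 → ZMod (q-1)) ≃ (Fin 2 → ZMod (q-1)) :=
    { toFun := M.mulVec
      invFun := M⁻¹.mulVec
      left_inv := fun x => by rw [Matrix.mulVec_mulVec, hMinv, Matrix.one_mulVec]
      right_inv := fun x => by rw [Matrix.mulVec_mulVec, hMinv', Matrix.one_mulVec] }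
  -- equiv chain
  have hmv : ∀ x : Fin 2 → ZMod (q-1), M.mulVec x i = u * x 0 + v * x 1 := by
    intro x
    simp [Matrix.mulVec, dotProduct, Fin.sum_univ_two, hMi0, hMi1]
  let eq1 : {p : Fˣ × Fˣ // w p = 0} ≃
      {ab : ZMod (q-1) × ZMod (q-1) // (N : ZMod (q-1)) * (u * ab.1 + v * ab.2) = 0} :=
    ((Equiv.prodCongr ψe ψe).subtypeEquiv (fun ab => by
      exact (hkey2 ab.1 ab.2).symm)).symm
  let eq2 : {ab : ZMod (q-1) × ZMod (q-1) // (N : ZMod (q-1)) * (u * ab.1 + v * ab.2) = 0} ≃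
      {x : Fin 2 → ZMod (q-1) // (N : ZMod (q-1)) * (M.mulVec x i) = 0} :=
    ((finTwoArrowEquiv (ZMod (q-1))).subtypeEquiv (fun x => by
      rw [hmv x]; simp [finTwoArrowEquiv])).symm
  let eq3 : {x : Fin 2 → ZMod (q-1) // (N : ZMod (q-1)) * (M.mulVec x i) = 0} ≃
      {y : Fin 2 → ZMod (q-1) // (N : ZMod (q-1)) * y i = 0} :=
    Mequiv.subtypeEquiv (fun x => by rfl)
  -- lower bound for the target set
  have hcount : N * (q-1) ≤ Nat.card {y : Fin 2 → ZMod (q-1) // (N : ZMod (q-1)) * y i = 0} := by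
    have hinj : Function.Injective (fun kz : Fin N × ZMod (q-1) =>
        (⟨fun j => if j = i then (((q-1) / N * kz.1.val : ℕ) : ZMod (q-1)) else kz.2, by
          simp only [eq_self_iff_true, if_true]
          have : ((N : ℕ) : ZMod (q-1)) * (((q-1) / N * kz.1.val : ℕ) : ZMod (q-1))
              = ((N * ((q-1) / N) * kz.1.val : ℕ) : ZMod (q-1)) := by push_cast; ring
          rw [this, Nat.mul_div_cancel' hNdvd]
          simp [ZMod.natCast_self]⟩ :
          {y : Fin 2 → ZMod (q-1) // (N : ZMod (q-1)) * y i = 0})) := by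
      intro ⟨k, a⟩ ⟨k', a'⟩ h
      simp only [Subtype.mk_eq_mk] at h
      have hji : ∃ j : Fin 2, j ≠ i := by
        fin_cases i
        · exact ⟨1, by decide⟩
        · exact ⟨0, by decide⟩
      obtain ⟨j, hj⟩ := hji
      have ha : a = a' := by
        have := congrFun h j
        simpa [if_neg hj] using this
      have hk : k = k' := by
        have hval := congrFun h i
        simp only [eq_self_iff_true, if_true] at hval
        have hb : ∀ m : Fin N, (q-1) / N * m.val < (q-1) := by
          intro m
          have hNn : 0 < (q-1) / N := Nat.div_pos (Nat.le_of_dvd hn hNdvd) hN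
          have h1 : m.val + 1 ≤ N := m.2
          calc (q-1) / N * m.val < (q-1) / N * (m.val + 1) := by nlinarith
            _ ≤ (q-1) / N * N := Nat.mul_le_mul_left _ h1
            _ ≤ (q-1) := Nat.div_mul_le_self _ _
        have hval2 := congrArg ZMod.val hval
        rw [ZMod.val_cast_of_lt (hb k), ZMod.val_cast_of_lt (hb k')] at hval2
        have hNn : 0 < (q-1) / N := Nat.div_pos (Nat.le_of_dvd hn hNdvd) hN
        have : k.val = k'.val := Nat.eq_of_mul_eq_mul_left hNn hval2
        exact Fin.ext this
      simp [ha, hk]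
    calc N * (q-1) = Nat.card (Fin N × ZMod (q-1)) := by
          simp [Nat.card_eq_fintype_card, ZMod.card]
      _ ≤ _ := Nat.card_le_card_of_injective _ hinj
  have hzero : N * (q-1) ≤ Nat.card {p : Fˣ × Fˣ // w p = 0} := by
    rw [Nat.card_congr (eq1.trans (eq2.trans eq3))]
    exact hcount
  refine ⟨w, ⟨c, hsum⟩, hwne, hzero, ?_⟩
  -- upper bound for the complement
  have htot : Nat.card {p : Fˣ × Fˣ // w p ≠ 0}
      = (q-1) ^ 2 - Nat.card {p : Fˣ × Fˣ // w p = 0} := by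
    rw [Nat.card_eq_fintype_card, Nat.card_eq_fintype_card]
    rw [Fintype.card_subtype_compl (fun p => w p = 0)]
    congr 1
    rw [Fintype.card_prod, hcard, sq]
  rw [htot]
  exact Nat.sub_le_sub_left hzero _
end

section
/- Let q be a prime power and let S ⊆ {0, 1, …, q−2}² contain the four points (0,0), (a,b), (c,d), (a+c, b+d), where the sums are taken modulo q−1. Suppose (a,b) ≡ N₁·(a',b') and (c,d) ≡ N₂·(c',d') (mod q−1) with N₁, N₂ positive divisors of q−1 and (a',b'), (c',d') ∈ B over ℤ/(q−1)ℤ, and suppose (a',b') and (c',d') generate the additive group (ℤ/(q−1)ℤ)². Then d(C_S(𝔽_q)) ≤ (q−1)² − (N₁+N₂)(q−1) + N₁N₂. -/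
/-- Let `q` be a prime power, `F` a field with `q` elements, and `S ⊆ {0,…,q-2}²`
containing the four (distinct) vertices `(0,0)`, `(a,b)`, `(c,d)`, `(a+c, b+d)` of a
"parallelogram" (sums mod `q - 1`).  Suppose `(a,b) ≡ N₁·(a',b')` and
`(c,d) ≡ N₂·(c',d') (mod q - 1)` with `N₁, N₂` positive divisors of `q - 1`,
`(a',b'), (c',d') ∈ B`, and `(a',b')`, `(c',d')` generating `(ℤ/(q-1)ℤ)²`.  Then the
minimum distance of `C_S(F)` is at most `(q-1)² - (N₁+N₂)(q-1) + N₁N₂`. -/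
theorem toric_code_parallelogram_bound (q N₁ N₂ : ℕ) (hq : IsPrimePow q)
    (hN₁ : 0 < N₁) (hN₁dvd : N₁ ∣ q - 1) (hN₂ : 0 < N₂) (hN₂dvd : N₂ ∣ q - 1)
    (F : Type) [Field F] [Fintype F] (hF : Fintype.card F = q)
    (S : Finset (ℕ × ℕ)) (hS : ∀ s ∈ S, s.1 ≤ q - 2 ∧ s.2 ≤ q - 2)
    (a b c d : ℕ)
    (h0 : ((0, 0) : ℕ × ℕ) ∈ S) (hab : (a, b) ∈ S) (hcd : (c, d) ∈ S)
    (habcd : ((a + c) % (q - 1), (b + d) % (q - 1)) ∈ S)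
    (hdistinct : ([((0, 0) : ℕ × ℕ), (a, b), (c, d),
        ((a + c) % (q - 1), (b + d) % (q - 1))] : List (ℕ × ℕ)).Pairwise (· ≠ ·))
    (a' b' c' d' : ZMod (q - 1))
    (ha' : (a : ZMod (q - 1)) = (N₁ : ZMod (q - 1)) * a')
    (hb' : (b : ZMod (q - 1)) = (N₁ : ZMod (q - 1)) * b')
    (hc' : (c : ZMod (q - 1)) = (N₂ : ZMod (q - 1)) * c')
    (hd' : (d : ZMod (q - 1)) = (N₂ : ZMod (q - 1)) * d')
    (hab' : ((a', b') : ZMod (q - 1) × ZMod (q - 1)) ∈ Bset (ZMod (q - 1)))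
    (hcd' : ((c', d') : ZMod (q - 1) × ZMod (q - 1)) ∈ Bset (ZMod (q - 1)))
    (hgen : AddSubgroup.closure
      ({((a', b') : ZMod (q - 1) × ZMod (q - 1)), ((c', d') : ZMod (q - 1) × ZMod (q - 1))} :
        Set (ZMod (q - 1) × ZMod (q - 1))) = ⊤) :
    ∃ w : Fˣ × Fˣ → F,
      (∃ co : ℕ × ℕ → F,
        ∀ p : Fˣ × Fˣ, w p = ∑ s ∈ S, co s * (p.1 : F) ^ s.1 * (p.2 : F) ^ s.2) ∧
      w ≠ 0 ∧
      (Nat.card {p : Fˣ × Fˣ // w p ≠ 0} : ℤ) ≤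
        ((q : ℤ) - 1) ^ 2 - (N₁ + N₂) * ((q : ℤ) - 1) + N₁ * N₂ := by
  classical
  have hq2 : 2 ≤ q := hq.two_le
  haveI : NeZero (q - 1) := ⟨by omega⟩
  -- distinctness facts
  have h0ab : ((0,0) : ℕ × ℕ) ≠ (a, b) := by
    simp only [List.pairwise_cons, List.mem_cons, List.mem_singleton] at hdistinct
    exact hdistinct.1 _ (Or.inl rfl)
  have h0cd : ((0,0) : ℕ × ℕ) ≠ (c, d) := by
    simp only [List.pairwise_cons, List.mem_cons, List.mem_singleton] at hdistinct
    exact hdistinct.1 _ (Or.inr (Or.inl rfl))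
  have haq : a ≤ q - 2 := (hS _ hab).1
  have hbq : b ≤ q - 2 := (hS _ hab).2
  have hcq : c ≤ q - 2 := (hS _ hcd).1
  have hdq : d ≤ q - 2 := (hS _ hcd).2
  have hN₁n : N₁ ≤ q - 1 := Nat.le_of_dvd (by omega) hN₁dvd
  have hN₂n : N₂ ≤ q - 1 := Nat.le_of_dvd (by omega) hN₂dvd
  have hN₁ne : (N₁ : ZMod (q - 1)) ≠ 0 := by
    intro h
    have ha0 : (a : ZMod (q - 1)) = 0 := by rw [ha', h, zero_mul]
    have hb0 : (b : ZMod (q - 1)) = 0 := by rw [hb', h, zero_mul]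
    rw [ZMod.natCast_eq_zero_iff] at ha0 hb0
    exact h0ab (by
      have ea : a = 0 := Nat.eq_zero_of_dvd_of_lt ha0 (by omega)
      have eb : b = 0 := Nat.eq_zero_of_dvd_of_lt hb0 (by omega)
      simp [ea, eb])
  have hN₂ne : (N₂ : ZMod (q - 1)) ≠ 0 := by
    intro h
    have hc0 : (c : ZMod (q - 1)) = 0 := by rw [hc', h, zero_mul]
    have hd0 : (d : ZMod (q - 1)) = 0 := by rw [hd', h, zero_mul]
    rw [ZMod.natCast_eq_zero_iff] at hc0 hd0
    exact h0cd (by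
      have ec : c = 0 := Nat.eq_zero_of_dvd_of_lt hc0 (by omega)
      have ed : d = 0 := Nat.eq_zero_of_dvd_of_lt hd0 (by omega)
      simp [ec, ed])
  -- cyclic generator of Fˣ
  have hcardU : Fintype.card Fˣ = q - 1 := by rw [Fintype.card_units, hF]
  obtain ⟨g, hg⟩ := IsCyclic.exists_generator (α := Fˣ)
  have horder : orderOf g = q - 1 := by
    rw [orderOf_eq_card_of_forall_mem_zpowers hg, Nat.card_eq_fintype_card, hcardU]
  set e : ZMod (q - 1) → Fˣ := fun u => g ^ u.val with hedef
  have he_inj : Function.Injective e := by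
    intro u v huv
    have h1 : u.val ∈ Set.Iio (orderOf g) := by rw [horder]; exact ZMod.val_lt u
    have h2 : v.val ∈ Set.Iio (orderOf g) := by rw [horder]; exact ZMod.val_lt v
    exact ZMod.val_injective _ (pow_injOn_Iio_orderOf h1 h2 huv)
  have he_bij : Function.Bijective e := by
    rw [Fintype.bijective_iff_injective_and_card]
    exact ⟨he_inj, by rw [ZMod.card, hcardU]⟩
  -- key character computation
  have hkey : ∀ (m₁ m₂ : ℕ) (u v : ZMod (q - 1)),
      ((e u : Fˣ) ^ m₁ * (e v) ^ m₂ = 1 ↔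
        (m₁ : ZMod (q - 1)) * u + (m₂ : ZMod (q - 1)) * v = 0) := by
    intro m₁ m₂ u v
    have : (e u) ^ m₁ * (e v) ^ m₂ = g ^ (u.val * m₁ + v.val * m₂) := by
      rw [hedef]; simp [← pow_mul, ← pow_add]
    rw [this, ← orderOf_dvd_iff_pow_eq_one, horder,
      ← ZMod.natCast_eq_zero_iff]
    push_cast
    rw [ZMod.natCast_val, ZMod.natCast_val, ZMod.cast_id, ZMod.cast_id]
    constructor <;> intro h <;> linear_combination h
  -- surjectivity of the row-combination map
  have hsurj : ∀ z : ZMod (q - 1) × ZMod (q - 1), ∃ u v : ZMod (q - 1),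
      u * a' + v * c' = z.1 ∧ u * b' + v * d' = z.2 := by
    set φ : (ZMod (q - 1) × ZMod (q - 1)) →+ (ZMod (q - 1) × ZMod (q - 1)) :=
      { toFun := fun w => (w.1 * a' + w.2 * c', w.1 * b' + w.2 * d')
        map_zero' := by simp
        map_add' := by intro x y; simp; constructor <;> ring } with hφdef
    have hle : AddSubgroup.closure ({((a', b')), ((c', d'))} :
        Set (ZMod (q - 1) × ZMod (q - 1))) ≤ φ.range := by
      rw [AddSubgroup.closure_le]
      rintro z (rfl | hz)
      · exact ⟨(1, 0), by simp [hφdef]⟩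
      · rcases hz with rfl
        exact ⟨(0, 1), by simp [hφdef]⟩
    rw [hgen] at hle
    have hsur : Function.Surjective φ := AddMonoidHom.range_eq_top.mp (top_le_iff.mp hle)
    intro z
    obtain ⟨w, hw⟩ := hsur z
    refine ⟨w.1, w.2, ?_, ?_⟩
    · rw [← hw]; rfl
    · rw [← hw]; rfl
  obtain ⟨u₀, v₀, h1, h2⟩ := hsurj (1, 0)
  obtain ⟨s₀, t₀, h3, h4⟩ := hsurj (0, 1)
  set ε : ZMod (q - 1) := u₀ * t₀ - v₀ * s₀ with hεdef
  have hεδ : ε * (a' * d' - b' * c') = 1 := by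
    rw [hεdef]
    linear_combination (s₀ * b' + t₀ * d') * h1 + h4 - (s₀ * a' + t₀ * c') * h2
  -- the reparametrization
  set ψ : ZMod (q - 1) × ZMod (q - 1) → ZMod (q - 1) × ZMod (q - 1) :=
    fun st => (ε * (d' * st.1 - b' * st.2), ε * (a' * st.2 - c' * st.1)) with hψdef
  have hψ1 : ∀ st : ZMod (q - 1) × ZMod (q - 1), a' * (ψ st).1 + b' * (ψ st).2 = st.1 := by
    intro st; simp only [hψdef]; linear_combination st.1 * hεδ
  have hψ2 : ∀ st : ZMod (q - 1) × ZMod (q - 1), c' * (ψ st).1 + d' * (ψ st).2 = st.2 := by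
    intro st; simp only [hψdef]; linear_combination st.2 * hεδ
  have hψ_bij : Function.Bijective ψ := by
    have hli : Function.LeftInverse
        (fun uv : ZMod (q-1) × ZMod (q-1) => (a' * uv.1 + b' * uv.2, c' * uv.1 + d' * uv.2)) ψ := by
      intro st
      exact Prod.ext (hψ1 st) (hψ2 st)
    have hri : Function.RightInverse
        (fun uv : ZMod (q-1) × ZMod (q-1) => (a' * uv.1 + b' * uv.2, c' * uv.1 + d' * uv.2)) ψ := by
      intro uv
      simp only [hψdef]
      refine Prod.ext ?_ ?_
      · simp only; linear_combination uv.1 * hεδ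
      · simp only; linear_combination uv.2 * hεδ
    exact ⟨hli.injective, hri.surjective⟩
  set Θ : ZMod (q - 1) × ZMod (q - 1) → Fˣ × Fˣ := fun st => (e (ψ st).1, e (ψ st).2)
    with hΘdef
  have hΘ_bij : Function.Bijective Θ := by
    have hh : Θ = (Prod.map e e) ∘ ψ := rfl
    rw [hh]
    exact (he_bij.prodMap he_bij).comp hψ_bij
  -- the codeword
  set w : Fˣ × Fˣ → F := fun p =>
    ((p.1 : F) ^ a * (p.2 : F) ^ b - 1) * ((p.1 : F) ^ c * (p.2 : F) ^ d - 1) with hwdef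
  -- pointwise values at reparametrized points
  have hchar : ∀ (m₁ m₂ : ℕ) (p : Fˣ × Fˣ),
      ((p.1 : F) ^ m₁ * (p.2 : F) ^ m₂ = 1 ↔ p.1 ^ m₁ * p.2 ^ m₂ = 1) := by
    intro m₁ m₂ p
    rw [← Units.val_one (α := F)]
    push_cast
    exact ⟨fun h => Units.ext h, fun h => congrArg Units.val h⟩
  have hpoint : ∀ st : ZMod (q - 1) × ZMod (q - 1),
      (w (Θ st) ≠ 0 ↔ (N₁ : ZMod (q - 1)) * st.1 ≠ 0 ∧ (N₂ : ZMod (q - 1)) * st.2 ≠ 0) := by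
    intro st
    have e1 : ((Θ st).1 : F) ^ a * ((Θ st).2 : F) ^ b = 1 ↔
        (N₁ : ZMod (q - 1)) * st.1 = 0 := by
      rw [hchar a b (Θ st), hΘdef]
      simp only
      rw [hkey a b]
      rw [ha', hb']
      constructor <;> intro h
      · rw [← hψ1 st]; linear_combination h
      · rw [mul_assoc, mul_assoc, ← mul_add, hψ1 st]; exact h
    have e2 : ((Θ st).1 : F) ^ c * ((Θ st).2 : F) ^ d = 1 ↔
        (N₂ : ZMod (q - 1)) * st.2 = 0 := by
      rw [hchar c d (Θ st), hΘdef]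
      simp only
      rw [hkey c d]
      rw [hc', hd']
      constructor <;> intro h
      · rw [← hψ2 st]; linear_combination h
      · rw [mul_assoc, mul_assoc, ← mul_add, hψ2 st]; exact h
    rw [hwdef]
    simp only [mul_ne_zero_iff, sub_ne_zero]
    exact and_congr (not_iff_not.mpr e1) (not_iff_not.mpr e2)
  refine ⟨w, ?_, ?_, ?_⟩
  · -- representation as a sum over S
    refine ⟨fun s => (if s = ((0:ℕ),(0:ℕ)) then 1 else 0) + (if s = (a,b) then -1 else 0)
      + (if s = (c,d) then -1 else 0)
      + (if s = ((a+c) % (q-1), (b+d) % (q-1)) then 1 else 0), fun p => ?_⟩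
    have hXq : ∀ x : Fˣ, (x : F) ^ (q - 1) = 1 := by
      intro x
      have : x ^ (q - 1) = 1 := by rw [← hcardU]; exact pow_card_eq_one
      calc (x : F) ^ (q-1) = ((x ^ (q-1) : Fˣ) : F) := by push_cast; ring
      _ = 1 := by rw [this, Units.val_one]
    have hac : (p.1 : F) ^ ((a + c) % (q - 1)) = (p.1 : F) ^ (a + c) :=
      (pow_eq_pow_mod (a + c) (hXq p.1)).symm
    have hbd : (p.2 : F) ^ ((b + d) % (q - 1)) = (p.2 : F) ^ (b + d) :=
      (pow_eq_pow_mod (b + d) (hXq p.2)).symm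
    simp only [add_mul, Finset.sum_add_distrib, ite_mul, zero_mul, one_mul, neg_mul]
    rw [Finset.sum_ite_eq' S ((0:ℕ),(0:ℕ)), Finset.sum_ite_eq' S ((a,b) : ℕ × ℕ),
      Finset.sum_ite_eq' S ((c,d) : ℕ × ℕ),
      Finset.sum_ite_eq' S (((a+c) % (q-1), (b+d) % (q-1)) : ℕ × ℕ)]
    rw [if_pos h0, if_pos hab, if_pos hcd, if_pos habcd]
    simp only [hwdef, hac, hbd]
    rw [pow_add, pow_add]
    ring
  · -- nonzero
    intro hzero
    have := (hpoint (1, 1)).mpr ⟨by simpa using hN₁ne, by simpa using hN₂ne⟩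
    rw [hzero] at this
    exact this rfl
  · -- counting
    have hcount : Nat.card {p : Fˣ × Fˣ // w p ≠ 0} =
        Nat.card ({s : ZMod (q-1) // (N₁ : ZMod (q-1)) * s ≠ 0} ×
          {t : ZMod (q-1) // (N₂ : ZMod (q-1)) * t ≠ 0}) := by
      have eqv : {st : ZMod (q-1) × ZMod (q-1) //
          (N₁ : ZMod (q-1)) * st.1 ≠ 0 ∧ (N₂ : ZMod (q-1)) * st.2 ≠ 0} ≃
          {p : Fˣ × Fˣ // w p ≠ 0} :=
        (Equiv.ofBijective Θ hΘ_bij).subtypeEquiv (fun st => (hpoint st).symm)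
      exact Nat.card_congr (eqv.symm.trans (Equiv.subtypeProdEquivProd
        (p := fun s : ZMod (q-1) => (N₁ : ZMod (q-1)) * s ≠ 0)
        (q := fun t : ZMod (q-1) => (N₂ : ZMod (q-1)) * t ≠ 0)))
    rw [hcount, Nat.card_prod]
    have key : ∀ N : ℕ, 0 < N → N ∣ q - 1 →
        Nat.card {s : ZMod (q-1) // (N : ZMod (q-1)) * s ≠ 0} ≤ (q - 1) - N := by
      intro N hNpos hNdvd
      have hker : N ≤ Fintype.card {s : ZMod (q-1) // (N : ZMod (q-1)) * s = 0} := by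
        have hdiv : 0 < (q-1) / N := Nat.div_pos (Nat.le_of_dvd (by omega) hNdvd) hNpos
        have hf : Function.Injective (fun i : Fin N =>
            (⟨((i.val * ((q-1) / N) : ℕ) : ZMod (q-1)), by
              have : (N : ZMod (q-1)) * ((i.val * ((q-1) / N) : ℕ) : ZMod (q-1)) =
                  ((N * (i.val * ((q-1)/N)) : ℕ) : ZMod (q-1)) := by push_cast; ring
              rw [this, show N * (i.val * ((q-1)/N)) = i.val * (q-1) by
                rw [Nat.mul_left_comm, Nat.mul_div_cancel' hNdvd]]
              push_cast
              simp [ZMod.natCast_self]⟩ :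
              {s : ZMod (q-1) // (N : ZMod (q-1)) * s = 0})) := by
          intro i j hij
          have hlt : ∀ k : Fin N, k.val * ((q-1)/N) < q - 1 := by
            intro k
            calc k.val * ((q-1)/N) < N * ((q-1)/N) :=
              (Nat.mul_lt_mul_right hdiv).mpr k.isLt
            _ = q - 1 := Nat.mul_div_cancel' hNdvd
          have := congrArg (fun s : {s : ZMod (q-1) // (N : ZMod (q-1)) * s = 0} =>
            (s : ZMod (q-1)).val) hij
          simp only [ZMod.val_cast_of_lt (hlt i), ZMod.val_cast_of_lt (hlt j)] at this
          ext
          exact Nat.eq_of_mul_eq_mul_right hdiv this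
        simpa using Fintype.card_le_of_injective _ hf
      rw [Nat.card_eq_fintype_card]
      calc Fintype.card {s : ZMod (q-1) // ¬ ((N : ZMod (q-1)) * s = 0)} =
          Fintype.card (ZMod (q-1)) -
            Fintype.card {s : ZMod (q-1) // (N : ZMod (q-1)) * s = 0} :=
        Fintype.card_subtype_compl _
      _ ≤ (q - 1) - N := by rw [ZMod.card]; omega
    have k1 := key N₁ hN₁ hN₁dvd
    have k2 := key N₂ hN₂ hN₂dvd
    have hle : Nat.card {s : ZMod (q-1) // (N₁ : ZMod (q-1)) * s ≠ 0} *
        Nat.card {t : ZMod (q-1) // (N₂ : ZMod (q-1)) * t ≠ 0} ≤ ((q-1) - N₁) * ((q-1) - N₂) :=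
      Nat.mul_le_mul k1 k2
    calc (↑(Nat.card {s : ZMod (q-1) // (N₁ : ZMod (q-1)) * s ≠ 0} *
        Nat.card {t : ZMod (q-1) // (N₂ : ZMod (q-1)) * t ≠ 0}) : ℤ) ≤
        ((((q-1) - N₁) * ((q-1) - N₂) : ℕ) : ℤ) := by exact_mod_cast hle
    _ = ((q:ℤ) - 1 - N₁) * ((q:ℤ) - 1 - N₂) := by
        push_cast [Nat.cast_sub hN₁n, Nat.cast_sub hN₂n, Nat.cast_sub (by omega : 1 ≤ q)]
        ring
    _ = ((q : ℤ) - 1) ^ 2 - (N₁ + N₂) * ((q : ℤ) - 1) + N₁ * N₂ := by ring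
end

section
/- Let q be a prime power, M an invertible 2×2 matrix over ℤ/(q−1)ℤ, v ∈ (ℤ/(q−1)ℤ)², and let T(w) = Mw + v. Let S₁ ⊆ (ℤ/(q−1)ℤ)² and S₂ = T(S₁). Then the generalized toric codes C_{S₁}(𝔽_q) and C_{S₂}(𝔽_q) are monomially equivalent: there exist a permutation π of the index set (𝔽_q^×)² and a function c : (𝔽_q^×)² → 𝔽_q^× such that C_{S₂}(𝔽_q) = { (c(p)·w_{π(p)})_{p ∈ (𝔽_q^×)²} : w ∈ C_{S₁}(𝔽_q) }. -/
lemma pow_val_congr {R : Type*} [Monoid R] {n : ℕ} (u : R) (hu : u ^ n = 1) {a b : ℕ}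
    (h : (a : ZMod n) = (b : ZMod n)) : u ^ a = u ^ b := by
  rw [ZMod.natCast_eq_natCast_iff] at h
  rcases le_total a b with hab | hab
  · obtain ⟨k, hk⟩ := (Nat.modEq_iff_dvd' hab).mp h
    have : b = a + n * k := by omega
    rw [this, pow_add, pow_mul, hu, one_pow, mul_one]
  · obtain ⟨k, hk⟩ := (Nat.modEq_iff_dvd' hab).mp h.symm
    have : a = b + n * k := by omega
    rw [this, pow_add, pow_mul, hu, one_pow, mul_one]

lemma pow_val_add {R : Type*} [Monoid R] {n : ℕ} [NeZero n] (u : R) (hu : u ^ n = 1)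
    (a b : ZMod n) : u ^ (a + b).val = u ^ a.val * u ^ b.val := by
  rw [← pow_add]
  apply pow_val_congr u hu
  push_cast [ZMod.natCast_val, ZMod.cast_id]
  ring

lemma pow_val_mul {R : Type*} [Monoid R] {n : ℕ} [NeZero n] (u : R) (hu : u ^ n = 1)
    (a b : ZMod n) : u ^ (a * b).val = (u ^ a.val) ^ b.val := by
  rw [← pow_mul]
  apply pow_val_congr u hu
  push_cast [ZMod.natCast_val, ZMod.cast_id]
  ring

lemma pow_val_one {R : Type*} [Monoid R] {n : ℕ} [NeZero n] (u : R) (hu : u ^ n = 1) :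
    u ^ (1 : ZMod n).val = u := by
  conv_rhs => rw [← pow_one u]
  apply pow_val_congr u hu
  simp

lemma pow_pow_key {R : Type*} [CommMonoid R] {n : ℕ} [NeZero n] (X Y : R)
    (hX : X ^ n = 1) (hY : Y ^ n = 1) (a b c d e f : ZMod n) :
    (X ^ a.val * Y ^ b.val) ^ c.val * (X ^ d.val * Y ^ e.val) ^ f.val
      = X ^ (a * c + d * f).val * Y ^ (b * c + e * f).val := by
  rw [mul_pow, mul_pow, pow_val_add X hX, pow_val_add Y hY,
    pow_val_mul X hX, pow_val_mul X hX, pow_val_mul Y hY, pow_val_mul Y hY]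
  exact mul_mul_mul_comm _ _ _ _

/-- The generalized toric code `C_S(F)` for a set `S` of exponent vectors in
`(ℤ/(q-1)ℤ)²` (exponents read via their representatives in `{0,…,q-2}`): the set of
evaluation vectors on the torus `(Fˣ)²` of the `F`-linear combinations of the
monomials `x^{s₁} y^{s₂}`, `(s₁,s₂) ∈ S`. -/
def toricCode (q : ℕ) (F : Type) [Field F]
    (S : Finset (ZMod (q - 1) × ZMod (q - 1))) : Set ((Fˣ × Fˣ) → F) :=
  {w | ∃ c : ZMod (q - 1) × ZMod (q - 1) → F,
    ∀ p : Fˣ × Fˣ, w p = ∑ s ∈ S, c s * (p.1 : F) ^ s.1.val * (p.2 : F) ^ s.2.val}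

/-- Let `q` be a prime power, `F` a field with `q` elements, `M` an invertible `2 × 2`
matrix over `ℤ/(q-1)ℤ`, `v ∈ (ℤ/(q-1)ℤ)²`, and `T(w) = Mw + v`.  If `S₂ = T(S₁)`,
then the generalized toric codes `C_{S₁}(F)` and `C_{S₂}(F)` are monomially
equivalent: some permutation `π` of the torus and nonzero scalars `c(p)` carry
`C_{S₁}(F)` onto `C_{S₂}(F)`. -/
theorem toric_codes_monomially_equivalent (q : ℕ) (hq : IsPrimePow q)
    (F : Type) [Field F] [Fintype F] (hF : Fintype.card F = q)
    (M : Matrix (Fin 2) (Fin 2) (ZMod (q - 1))) (hM : IsUnit M.det)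
    (v : ZMod (q - 1) × ZMod (q - 1))
    (S₁ S₂ : Finset (ZMod (q - 1) × ZMod (q - 1)))
    (hS₂ : S₂ = S₁.image (fun w : ZMod (q - 1) × ZMod (q - 1) =>
      (M 0 0 * w.1 + M 0 1 * w.2 + v.1, M 1 0 * w.1 + M 1 1 * w.2 + v.2))) :
    ∃ (π : (Fˣ × Fˣ) ≃ (Fˣ × Fˣ)) (c : Fˣ × Fˣ → Fˣ),
      toricCode q F S₂ =
        {w' | ∃ w ∈ toricCode q F S₁, w' = fun p : Fˣ × Fˣ => (c p : F) * w (π p)} := by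
  classical
  have hq2 : 2 ≤ q := hq.two_le
  have hn : NeZero (q - 1) := ⟨by omega⟩
  have hcard : Fintype.card Fˣ = q - 1 := by rw [Fintype.card_units, hF]
  have hun : ∀ u : Fˣ, u ^ (q - 1) = 1 := fun u => by rw [← hcard]; exact pow_card_eq_one
  have hUF : ∀ u : Fˣ, (u : F) ^ (q - 1) = 1 := fun u => by
    rw [← Units.val_pow_eq_pow_val, hun, Units.val_one]
  set N := M⁻¹ with hNdef
  have hMN : M * N = 1 := Matrix.mul_nonsing_inv M hM
  have hNM : N * M = 1 := Matrix.nonsing_inv_mul M hM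
  have entry : ∀ (A B : Matrix (Fin 2) (Fin 2) (ZMod (q-1))), A * B = 1 → ∀ i j : Fin 2,
      A i 0 * B 0 j + A i 1 * B 1 j = (1 : Matrix (Fin 2) (Fin 2) (ZMod (q-1))) i j := by
    intro A B hAB i j
    have := congrFun (congrFun hAB i) j
    rw [Matrix.mul_apply, Fin.sum_univ_two] at this
    exact this
  set T : ZMod (q - 1) × ZMod (q - 1) → ZMod (q - 1) × ZMod (q - 1) :=
    (fun w : ZMod (q - 1) × ZMod (q - 1) =>
      (M 0 0 * w.1 + M 0 1 * w.2 + v.1, M 1 0 * w.1 + M 1 1 * w.2 + v.2)) with hT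
  have hTinj : Function.Injective T := by
    intro w w' h
    rw [hT, Prod.mk.injEq] at h
    obtain ⟨h1, h2⟩ := h
    have f1 : N 0 0 * M 0 0 + N 0 1 * M 1 0 = 1 := by
      have := entry N M hNM 0 0; simpa using this
    have f2 : N 0 0 * M 0 1 + N 0 1 * M 1 1 = 0 := by
      have := entry N M hNM 0 1; simpa [Matrix.one_apply] using this
    have f3 : N 1 0 * M 0 0 + N 1 1 * M 1 0 = 0 := by
      have := entry N M hNM 1 0; simpa [Matrix.one_apply] using this
    have f4 : N 1 0 * M 0 1 + N 1 1 * M 1 1 = 1 := by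
      have := entry N M hNM 1 1; simpa using this
    have g1 : w.1 = w'.1 := by
      linear_combination N 0 0 * h1 + N 0 1 * h2 - (w.1 - w'.1) * f1 - (w.2 - w'.2) * f2
    have g2 : w.2 = w'.2 := by
      linear_combination N 1 0 * h1 + N 1 1 * h2 - (w.1 - w'.1) * f3 - (w.2 - w'.2) * f4
    exact Prod.ext g1 g2
  set πf : Fˣ × Fˣ → Fˣ × Fˣ := fun p =>
    (p.1 ^ (M 0 0).val * p.2 ^ (M 1 0).val, p.1 ^ (M 0 1).val * p.2 ^ (M 1 1).val) with hπf
  set πg : Fˣ × Fˣ → Fˣ × Fˣ := fun p =>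
    (p.1 ^ (N 0 0).val * p.2 ^ (N 1 0).val, p.1 ^ (N 0 1).val * p.2 ^ (N 1 1).val) with hπg
  have comp_id : ∀ (A B : Matrix (Fin 2) (Fin 2) (ZMod (q-1))), A * B = 1 → ∀ p : Fˣ × Fˣ,
      ((p.1 ^ (A 0 0).val * p.2 ^ (A 1 0).val) ^ (B 0 0).val *
        (p.1 ^ (A 0 1).val * p.2 ^ (A 1 1).val) ^ (B 1 0).val,
       (p.1 ^ (A 0 0).val * p.2 ^ (A 1 0).val) ^ (B 0 1).val *
        (p.1 ^ (A 0 1).val * p.2 ^ (A 1 1).val) ^ (B 1 1).val) = p := by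
    intro A B hAB p
    have h1 : A 0 0 * B 0 0 + A 0 1 * B 1 0 = 1 := by
      have := entry A B hAB 0 0; simpa using this
    have h2 : A 1 0 * B 0 0 + A 1 1 * B 1 0 = 0 := by
      have := entry A B hAB 1 0; simpa [Matrix.one_apply] using this
    have h3 : A 0 0 * B 0 1 + A 0 1 * B 1 1 = 0 := by
      have := entry A B hAB 0 1; simpa [Matrix.one_apply] using this
    have h4 : A 1 0 * B 0 1 + A 1 1 * B 1 1 = 1 := by
      have := entry A B hAB 1 1; simpa using this
    have c1 : (p.1 ^ (A 0 0).val * p.2 ^ (A 1 0).val) ^ (B 0 0).val *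
        (p.1 ^ (A 0 1).val * p.2 ^ (A 1 1).val) ^ (B 1 0).val = p.1 := by
      rw [pow_pow_key p.1 p.2 (hun p.1) (hun p.2), h1, h2, pow_val_one p.1 (hun p.1)]
      simp [ZMod.val_zero]
    have c2 : (p.1 ^ (A 0 0).val * p.2 ^ (A 1 0).val) ^ (B 0 1).val *
        (p.1 ^ (A 0 1).val * p.2 ^ (A 1 1).val) ^ (B 1 1).val = p.2 := by
      rw [pow_pow_key p.1 p.2 (hun p.1) (hun p.2), h3, h4, pow_val_one p.2 (hun p.2)]
      simp [ZMod.val_zero]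
    exact Prod.ext (by simpa using c1) (by simpa using c2)
  have hleft : Function.LeftInverse πg πf := fun p => comp_id M N hMN p
  have hright : Function.RightInverse πg πf := fun p => comp_id N M hNM p
  have mono_key : ∀ (s : ZMod (q - 1) × ZMod (q - 1)) (p : Fˣ × Fˣ),
      (p.1 : F) ^ (T s).1.val * (p.2 : F) ^ (T s).2.val
        = ((p.1 : F) ^ v.1.val * (p.2 : F) ^ v.2.val) *
          (((πf p).1 : F) ^ s.1.val * ((πf p).2 : F) ^ s.2.val) := by
    intro s p
    have hx := hUF p.1
    have hy := hUF p.2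
    rw [hπf, hT]
    simp only [Units.val_mul, Units.val_pow_eq_pow_val]
    rw [pow_pow_key ((p.1 : F)) ((p.2 : F)) hx hy]
    simp only [pow_val_add (p.1 : F) hx, pow_val_add (p.2 : F) hy]
    ring
  have sum_key : ∀ (d : ZMod (q - 1) × ZMod (q - 1) → F) (p : Fˣ × Fˣ),
      (∑ t ∈ S₂, d t * (p.1 : F) ^ t.1.val * (p.2 : F) ^ t.2.val)
        = ((p.1 : F) ^ v.1.val * (p.2 : F) ^ v.2.val) *
          ∑ s ∈ S₁, d (T s) * ((πf p).1 : F) ^ s.1.val * ((πf p).2 : F) ^ s.2.val := by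
    intro d p
    rw [hS₂, Finset.sum_image (fun a _ b _ h => hTinj h), Finset.mul_sum]
    refine Finset.sum_congr rfl fun s _ => ?_
    rw [mul_assoc, mono_key s p]
    ring
  refine ⟨⟨πf, πg, hleft, hright⟩, fun p => p.1 ^ v.1.val * p.2 ^ v.2.val, ?_⟩
  ext w'
  simp only [Set.mem_setOf_eq, toricCode, Equiv.coe_fn_mk]
  constructor
  · rintro ⟨c₂, hc₂⟩
    refine ⟨fun p => ∑ s ∈ S₁, c₂ (T s) * (p.1 : F) ^ s.1.val * (p.2 : F) ^ s.2.val,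
      ⟨fun s => c₂ (T s), fun p => rfl⟩, ?_⟩
    funext p
    rw [hc₂ p, sum_key c₂ p]
    simp [Units.val_mul, Units.val_pow_eq_pow_val]
  · rintro ⟨w, ⟨c₁, hc₁⟩, rfl⟩
    refine ⟨fun t => c₁ (Function.invFun T t), fun p => ?_⟩
    have hinv : ∀ s, Function.invFun T (T s) = s := Function.leftInverse_invFun hTinj
    rw [sum_key (fun t => c₁ (Function.invFun T t)) p]
    simp only [hinv]
    rw [← hc₁ (πf p)]
    simp [Units.val_mul, Units.val_pow_eq_pow_val]
end

section
/- Let r > 1 be an integer and R = ℤ/rℤ. Every pair of distinct points of R² is contained in at most one line of R² if and only if r is prime. -/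
/-- Over a field, a parametrized line through two distinct parameter points is the
line through them with direction `q - p`. -/
lemma line_eq_through {K : Type*} [Field K] (a b u v ℓ m : K) (hlm : ℓ ≠ m)
    (p q : K × K) (hp : p = (a + ℓ * u, b + ℓ * v)) (hq : q = (a + m * u, b + m * v)) :
    {x : K × K | ∃ s, x = (a + s * u, b + s * v)} =
      {x : K × K | ∃ t, x = (p.1 + t * (q.1 - p.1), p.2 + t * (q.2 - p.2))} := by
  subst hp hq
  have hc : m - ℓ ≠ 0 := sub_ne_zero.mpr (Ne.symm hlm)
  ext ⟨x, y⟩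
  simp only [Set.mem_setOf_eq, Prod.mk.injEq]
  constructor
  · rintro ⟨s, h1, h2⟩
    refine ⟨(s - ℓ) / (m - ℓ), ?_, ?_⟩
    · rw [h1]; field_simp; ring
    · rw [h2]; field_simp; ring
  · rintro ⟨t, h1, h2⟩
    refine ⟨ℓ + t * (m - ℓ), ?_, ?_⟩
    · rw [h1]; ring
    · rw [h2]; ring

/-- For `R = ℤ/rℤ` with `r > 1`, every pair of distinct points of `R²` lies on at
most one line if and only if `r` is prime. -/
theorem unique_line_iff_prime (r : ℕ) (hr : 1 < r) :
    (∀ p q : ZMod r × ZMod r, p ≠ q →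
      ∀ L₁ L₂ : Set (ZMod r × ZMod r), IsLine L₁ → IsLine L₂ →
        p ∈ L₁ → q ∈ L₁ → p ∈ L₂ → q ∈ L₂ → L₁ = L₂) ↔ Nat.Prime r := by
  haveI : NeZero r := ⟨by omega⟩
  constructor
  · intro h
    by_contra hnp
    obtain ⟨a, hadvd, ha2, halt⟩ := Nat.exists_dvd_of_not_prime2 hr hnp
    obtain ⟨b, hab⟩ := hadvd
    have hb2 : 2 ≤ b := by nlinarith
    have hblt : b < r := by nlinarith
    have hbne : (b : ZMod r) ≠ 0 := by
      intro h0
      have := (ZMod.natCast_eq_zero_iff b r).mp h0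
      exact absurd (Nat.le_of_dvd (by omega) this) (by omega)
    have hane : (a : ZMod r) ≠ 0 := by
      intro h0
      have := (ZMod.natCast_eq_zero_iff a r).mp h0
      exact absurd (Nat.le_of_dvd (by omega) this) (by omega)
    have hba : (b : ZMod r) * (a : ZMod r) = 0 := by
      rw [← Nat.cast_mul, ZMod.natCast_eq_zero_iff]
      exact ⟨1, by rw [hab]; ring⟩
    set L₁ : Set (ZMod r × ZMod r) :=
      {x | ∃ ℓ : ZMod r, x = (0 + ℓ * (1 : ZMod r), 0 + ℓ * (0 : ZMod r))} with hL₁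
    set L₂ : Set (ZMod r × ZMod r) :=
      {x | ∃ ℓ : ZMod r, x = (0 + ℓ * (1 : ZMod r), 0 + ℓ * ((a : ZMod r)))} with hL₂
    have hIsL₁ : IsLine L₁ := by
      refine ⟨0, 0, (1, 0), ⟨!![1, 0; 0, 1], ?_, 0, by simp, by simp⟩, rfl⟩
      simp [Matrix.det_fin_two_of]
    have hIsL₂ : IsLine L₂ := by
      refine ⟨0, 0, (1, (a : ZMod r)), ⟨!![1, (a : ZMod r); 0, 1], ?_, 0, by simp, by simp⟩, rfl⟩
      simp [Matrix.det_fin_two_of]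
    have hpq : ((0, 0) : ZMod r × ZMod r) ≠ ((b : ZMod r), 0) := by
      intro heq
      exact hbne (congrArg Prod.fst heq).symm
    have hmem1 : ((0, 0) : ZMod r × ZMod r) ∈ L₁ := ⟨0, by simp⟩
    have hmem2 : (((b : ZMod r), 0) : ZMod r × ZMod r) ∈ L₁ := ⟨(b : ZMod r), by simp⟩
    have hmem3 : ((0, 0) : ZMod r × ZMod r) ∈ L₂ := ⟨0, by simp⟩
    have hmem4 : (((b : ZMod r), 0) : ZMod r × ZMod r) ∈ L₂ := ⟨(b : ZMod r), by simp [hba]⟩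
    have hLeq := h _ _ hpq L₁ L₂ hIsL₁ hIsL₂ hmem1 hmem2 hmem3 hmem4
    have hmem5 : ((1, (a : ZMod r)) : ZMod r × ZMod r) ∈ L₂ := ⟨1, by simp⟩
    rw [← hLeq] at hmem5
    obtain ⟨ℓ, hℓ⟩ := hmem5
    have : (a : ZMod r) = 0 := by
      have h2 := (Prod.ext_iff.mp hℓ).2
      simpa using h2
    exact hane this
  · intro hp p q hpq L₁ L₂ hL₁ hL₂ hpL₁ hqL₁ hpL₂ hqL₂
    haveI : Fact r.Prime := ⟨hp⟩
    obtain ⟨a₁, b₁, ⟨u₁, v₁⟩, -, rfl⟩ := hL₁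
    obtain ⟨a₂, b₂, ⟨u₂, v₂⟩, -, rfl⟩ := hL₂
    obtain ⟨ℓ₁, hp₁⟩ := hpL₁
    obtain ⟨m₁, hq₁⟩ := hqL₁
    obtain ⟨ℓ₂, hp₂⟩ := hpL₂
    obtain ⟨m₂, hq₂⟩ := hqL₂
    have h₁ : ℓ₁ ≠ m₁ := fun h => hpq (by rw [hp₁, hq₁, h])
    have h₂ : ℓ₂ ≠ m₂ := fun h => hpq (by rw [hp₂, hq₂, h])
    rw [line_eq_through a₁ b₁ u₁ v₁ ℓ₁ m₁ h₁ p q hp₁ hq₁,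
      line_eq_through a₂ b₂ u₂ v₂ ℓ₂ m₂ h₂ p q hp₂ hq₂]
end

section
/- Let R = ℤ/6ℤ. The three pairs (1,0), (1,3), (4,3) all belong to B, the three lines R·(1,0), R·(1,3), R·(4,3) through the origin are pairwise distinct as subsets of R², and each of these three lines contains both (0,0) and (2,0). In particular, the number of distinct lines through the neighboring points (0,0) and (2,0) is at least 3, which is strictly greater than 6/o((2,0)) = 6/3 = 2, where o((2,0)) denotes the order of (2,0) in the additive group R². (Thus the line-count formula r/o for prime powers r fails when r = 6.) -/
/-- The line `R·(u,v)` through the origin, for `R = ℤ/6ℤ`. -/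
def line6 (u v : ZMod 6) : Set (ZMod 6 × ZMod 6) :=
  {p | ∃ ℓ : ZMod 6, p = (ℓ * u, ℓ * v)}


section Aux
open Matrix

lemma memB (u v w x : ZMod 6) (h : IsUnit (!![u, v; w, x] : Matrix (Fin 2) (Fin 2) (ZMod 6)).det) :
    ((u, v) : ZMod 6 × ZMod 6) ∈ Bset (ZMod 6) :=
  ⟨!![u, v; w, x], h, 0, by simp, by simp⟩

lemma lineIsLine (u v : ZMod 6) (h : ((u, v) : ZMod 6 × ZMod 6) ∈ Bset (ZMod 6)) :
    IsLine (line6 u v) := by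
  refine ⟨0, 0, (u, v), h, ?_⟩
  unfold line6
  simp

lemma notmem103 : ((1, 0) : ZMod 6 × ZMod 6) ∉ line6 1 3 := by
  rintro ⟨ℓ, h⟩
  rw [Prod.ext_iff] at h
  obtain ⟨h1, h2⟩ := h
  simp at h1 h2
  rw [← h1] at h2
  exact absurd h2 (by decide)

lemma notmem1043 : ((1, 0) : ZMod 6 × ZMod 6) ∉ line6 4 3 := by
  rintro ⟨ℓ, h⟩
  rw [Prod.ext_iff] at h
  have : (1 : ZMod 6) = ℓ * 4 := h.1
  revert this; revert ℓ; decide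

lemma notmem1343 : ((1, 3) : ZMod 6 × ZMod 6) ∉ line6 4 3 := by
  rintro ⟨ℓ, h⟩
  rw [Prod.ext_iff] at h
  have : (1 : ZMod 6) = ℓ * 4 := h.1
  revert this; revert ℓ; decide

lemma mem13 : ((1, 3) : ZMod 6 × ZMod 6) ∈ line6 1 3 := ⟨1, by decide⟩
lemma mem10 : ((1, 0) : ZMod 6 × ZMod 6) ∈ line6 1 0 := ⟨1, by decide⟩

end Aux

/-- In the affine plane over `ℤ/6ℤ`: the pairs `(1,0)`, `(1,3)`, `(4,3)` all belong to
`B`; the lines `R·(1,0)`, `R·(1,3)`, `R·(4,3)` are pairwise distinct and each contains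
both `(0,0)` and `(2,0)`, which are neighbors. In particular there are at least `3`
lines through `(0,0)` and `(2,0)`, strictly more than `6 / o((2,0)) = 2`. -/
theorem Zmod6_counterexample :
    ((1, 0) : ZMod 6 × ZMod 6) ∈ Bset (ZMod 6) ∧
    ((1, 3) : ZMod 6 × ZMod 6) ∈ Bset (ZMod 6) ∧
    ((4, 3) : ZMod 6 × ZMod 6) ∈ Bset (ZMod 6) ∧
    (line6 1 0 ≠ line6 1 3 ∧ line6 1 0 ≠ line6 4 3 ∧ line6 1 3 ≠ line6 4 3) ∧
    (((0, 0) : ZMod 6 × ZMod 6) ∈ line6 1 0 ∧ ((2, 0) : ZMod 6 × ZMod 6) ∈ line6 1 0) ∧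
    (((0, 0) : ZMod 6 × ZMod 6) ∈ line6 1 3 ∧ ((2, 0) : ZMod 6 × ZMod 6) ∈ line6 1 3) ∧
    (((0, 0) : ZMod 6 × ZMod 6) ∈ line6 4 3 ∧ ((2, 0) : ZMod 6 × ZMod 6) ∈ line6 4 3) ∧
    ((2, 0) : ZMod 6 × ZMod 6) ∉ Bset (ZMod 6) ∧
    addOrderOf ((2, 0) : ZMod 6 × ZMod 6) = 3 ∧
    3 ≤ Set.ncard {L : Set (ZMod 6 × ZMod 6) |
        IsLine L ∧ ((0, 0) : ZMod 6 × ZMod 6) ∈ L ∧ ((2, 0) : ZMod 6 × ZMod 6) ∈ L} ∧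
    6 / addOrderOf ((2, 0) : ZMod 6 × ZMod 6) <
      Set.ncard {L : Set (ZMod 6 × ZMod 6) |
        IsLine L ∧ ((0, 0) : ZMod 6 × ZMod 6) ∈ L ∧ ((2, 0) : ZMod 6 × ZMod 6) ∈ L} := by

  classical
  have hB1 : ((1, 0) : ZMod 6 × ZMod 6) ∈ Bset (ZMod 6) :=
    memB 1 0 0 1 (by simp [Matrix.det_fin_two_of])
  have hB2 : ((1, 3) : ZMod 6 × ZMod 6) ∈ Bset (ZMod 6) :=
    memB 1 3 0 1 (by simp [Matrix.det_fin_two_of])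
  have hB3 : ((4, 3) : ZMod 6 × ZMod 6) ∈ Bset (ZMod 6) :=
    memB 4 3 3 4 (by norm_num [Matrix.det_fin_two_of]; decide)
  have hne1 : line6 1 0 ≠ line6 1 3 := fun h => notmem103 (h ▸ mem10)
  have hne2 : line6 1 0 ≠ line6 4 3 := fun h => notmem1043 (h ▸ mem10)
  have hne3 : line6 1 3 ≠ line6 4 3 := fun h => notmem1343 (h ▸ mem13)
  have h00a : ((0, 0) : ZMod 6 × ZMod 6) ∈ line6 1 0 := ⟨0, by decide⟩
  have h20a : ((2, 0) : ZMod 6 × ZMod 6) ∈ line6 1 0 := ⟨2, by decide⟩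
  have h00b : ((0, 0) : ZMod 6 × ZMod 6) ∈ line6 1 3 := ⟨0, by decide⟩
  have h20b : ((2, 0) : ZMod 6 × ZMod 6) ∈ line6 1 3 := ⟨2, by decide⟩
  have h00c : ((0, 0) : ZMod 6 × ZMod 6) ∈ line6 4 3 := ⟨0, by decide⟩
  have h20c : ((2, 0) : ZMod 6 × ZMod 6) ∈ line6 4 3 := ⟨2, by decide⟩
  have hnB : ((2, 0) : ZMod 6 × ZMod 6) ∉ Bset (ZMod 6) := by
    rintro ⟨M, hu, i, h1, h2⟩
    have hdet : M.det = M 0 0 * M 1 1 - M 0 1 * M 1 0 := Matrix.det_fin_two M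
    have k1 : ∀ a b : ZMod 6, ¬ IsUnit (2 * a - 0 * b) := by decide
    have k2 : ∀ a b : ZMod 6, ¬ IsUnit (a * 0 - b * 2) := by decide
    fin_cases i <;> simp at h1 h2 <;> rw [h1, h2] at hdet <;> rw [hdet] at hu
    · exact k1 _ _ hu
    · exact k2 _ _ hu
  have hord : addOrderOf ((2, 0) : ZMod 6 × ZMod 6) = 3 := by
    refine addOrderOf_eq_prime (by decide) (by decide)
  have hsub : ({line6 1 0, line6 1 3, line6 4 3} : Set (Set (ZMod 6 × ZMod 6))) ⊆
      {L | IsLine L ∧ ((0, 0) : ZMod 6 × ZMod 6) ∈ L ∧ ((2, 0) : ZMod 6 × ZMod 6) ∈ L} := by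
    rintro L (rfl | rfl | rfl)
    · exact ⟨lineIsLine 1 0 hB1, h00a, h20a⟩
    · exact ⟨lineIsLine 1 3 hB2, h00b, h20b⟩
    · exact ⟨lineIsLine 4 3 hB3, h00c, h20c⟩
  have hcard3 : ({line6 1 0, line6 1 3, line6 4 3} : Set (Set (ZMod 6 × ZMod 6))).ncard = 3 := by
    rw [Set.ncard_insert_of_notMem (by simp [hne1, hne2]),
        Set.ncard_insert_of_notMem (by simp [hne3]), Set.ncard_singleton]
  have hle : 3 ≤ Set.ncard {L : Set (ZMod 6 × ZMod 6) |
      IsLine L ∧ ((0, 0) : ZMod 6 × ZMod 6) ∈ L ∧ ((2, 0) : ZMod 6 × ZMod 6) ∈ L} := by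
    rw [← hcard3]
    exact Set.ncard_le_ncard hsub (Set.toFinite _)
  refine ⟨hB1, hB2, hB3, ⟨hne1, hne2, hne3⟩, ⟨h00a, h20a⟩, ⟨h00b, h20b⟩, ⟨h00c, h20c⟩,
    hnB, hord, hle, ?_⟩
  rw [hord]
  omega
end

section
/- Let S ⊆ {0, 1, …, 7}² be any set of exponent vectors containing the three points (0,0), (3,1), and (1,3). Then the minimum distance of the generalized toric code C_S(𝔽₉) satisfies d(C_S(𝔽₉)) ≤ 64 − 3·8 = 40; concretely, choosing pairwise distinct nonzero β₁, β₂, β₃ ∈ 𝔽₉ with β₁ + β₂ + β₃ = 0, the nonzero linear combination x y³ + (β₁β₂ + β₁β₃ + β₂β₃) x³ y + β₁β₂β₃ of the monomials corresponding to S vanishes at exactly 24 points of (𝔽₉^×)². -/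
/-- Let `F` be the field with `9` elements and `S ⊆ {0,…,7}²` a set of exponent
vectors containing `(0,0)`, `(3,1)`, `(1,3)`.  For any pairwise distinct nonzero
`β₁, β₂, β₃ ∈ F` with `β₁ + β₂ + β₃ = 0`, the nonzero linear combination
`x y³ + (β₁β₂ + β₁β₃ + β₂β₃) x³ y + β₁β₂β₃` of monomials from `S` vanishes at exactly
`24` points of the torus `(Fˣ)²`; hence `d(C_S(F₉)) ≤ 64 - 3·8 = 40`. -/
theorem F9_collinear_min_dist_bound (F : Type) [Field F] [Fintype F]
    (hF : Fintype.card F = 9)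
    (S : Finset (ℕ × ℕ)) (hS : ∀ s ∈ S, s.1 ≤ 7 ∧ s.2 ≤ 7)
    (h1 : ((0, 0) : ℕ × ℕ) ∈ S) (h2 : ((3, 1) : ℕ × ℕ) ∈ S) (h3 : ((1, 3) : ℕ × ℕ) ∈ S)
    (β₁ β₂ β₃ : F) (hβ1 : β₁ ≠ 0) (hβ2 : β₂ ≠ 0) (hβ3 : β₃ ≠ 0)
    (h12 : β₁ ≠ β₂) (h13 : β₁ ≠ β₃) (h23 : β₂ ≠ β₃) (hsum : β₁ + β₂ + β₃ = 0) :
    ∃ w : Fˣ × Fˣ → F,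
      (∀ p : Fˣ × Fˣ, w p =
        (p.1 : F) * (p.2 : F) ^ 3 +
          (β₁ * β₂ + β₁ * β₃ + β₂ * β₃) * (p.1 : F) ^ 3 * (p.2 : F) +
          β₁ * β₂ * β₃) ∧
      (∃ c : ℕ × ℕ → F,
        ∀ p : Fˣ × Fˣ, w p = ∑ s ∈ S, c s * (p.1 : F) ^ s.1 * (p.2 : F) ^ s.2) ∧
      w ≠ 0 ∧
      Nat.card {p : Fˣ × Fˣ // w p = 0} = 24 ∧
      Nat.card {p : Fˣ × Fˣ // w p ≠ 0} ≤ 40 := by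
  classical
  set e₂ := β₁ * β₂ + β₁ * β₃ + β₂ * β₃ with he₂
  set e₃ := β₁ * β₂ * β₃ with he₃
  have hcardU : Fintype.card Fˣ = 8 := by rw [Fintype.card_units, hF]
  have hx9 : ∀ x : Fˣ, (x : F) ^ 9 = x := by
    intro x
    have h8 : (x : F) ^ 8 = 1 := by
      rw [← Units.val_pow_eq_pow_val, ← hcardU, pow_card_eq_one, Units.val_one]
    calc (x : F) ^ 9 = (x : F) ^ 8 * (x : F) := by ring
    _ = (x : F) := by rw [h8, one_mul]
  set w : Fˣ × Fˣ → F := fun p =>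
    (p.1 : F) * (p.2 : F) ^ 3 + e₂ * (p.1 : F) ^ 3 * (p.2 : F) + e₃ with hw
  have hfac : ∀ p : Fˣ × Fˣ, w p =
      ((p.1 : F) ^ 3 * (p.2 : F) + β₁) * ((p.1 : F) ^ 3 * (p.2 : F) + β₂) *
        ((p.1 : F) ^ 3 * (p.2 : F) + β₃) := by
    intro p
    have h9 := hx9 p.1
    simp only [hw, he₂, he₃]
    linear_combination (-(((p.1 : F) ^ 3 * (p.2 : F)) ^ 2)) * hsum - ((p.2 : F) ^ 3) * h9
  set c₁ : Fˣ := Units.mk0 (-β₁) (neg_ne_zero.mpr hβ1) with hc₁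
  set c₂ : Fˣ := Units.mk0 (-β₂) (neg_ne_zero.mpr hβ2) with hc₂
  set c₃ : Fˣ := Units.mk0 (-β₃) (neg_ne_zero.mpr hβ3) with hc₃
  have hcoe : ∀ p : Fˣ × Fˣ, ((p.1 ^ 3 * p.2 : Fˣ) : F) = (p.1 : F) ^ 3 * (p.2 : F) := by
    intro p; push_cast; ring
  have hunit : ∀ (p : Fˣ × Fˣ) (b : F) (hb : b ≠ 0),
      ((p.1 : F) ^ 3 * (p.2 : F) + b = 0 ↔ p.1 ^ 3 * p.2 = Units.mk0 (-b) (neg_ne_zero.mpr hb)) := by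
    intro p b hb
    rw [Units.ext_iff, hcoe p, Units.val_mk0]
    constructor
    · intro h; linear_combination h
    · intro h; rw [h]; ring
  have hziff : ∀ p : Fˣ × Fˣ,
      (w p = 0 ↔ (p.1 ^ 3 * p.2 = c₁ ∨ p.1 ^ 3 * p.2 = c₂ ∨ p.1 ^ 3 * p.2 = c₃)) := by
    intro p
    rw [hfac p, mul_eq_zero, mul_eq_zero, hunit p β₁ hβ1, hunit p β₂ hβ2, hunit p β₃ hβ3,
      or_assoc]
  have hfiber : ∀ c : Fˣ,
      (Finset.univ.filter fun p : Fˣ × Fˣ => p.1 ^ 3 * p.2 = c).card = 8 := by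
    intro c
    have himg : (Finset.univ.filter fun p : Fˣ × Fˣ => p.1 ^ 3 * p.2 = c)
        = Finset.univ.image (fun x : Fˣ => (x, (x ^ 3)⁻¹ * c)) := by
      ext p
      simp only [Finset.mem_filter, Finset.mem_univ, true_and, Finset.mem_image, Prod.ext_iff]
      constructor
      · intro h
        exact ⟨p.1, rfl, by rw [← h]; exact inv_mul_cancel_left _ _⟩
      · rintro ⟨x, h1', h2'⟩
        rw [← h1', ← h2']
        exact mul_inv_cancel_left _ _
    rw [himg, Finset.card_image_of_injective _ (fun a b h => congrArg Prod.fst h),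
      Finset.card_univ, hcardU]
  have hc12 : c₁ ≠ c₂ := by
    intro h
    exact h12 (neg_injective (by simpa [hc₁, hc₂, Units.ext_iff] using h))
  have hc13 : c₁ ≠ c₃ := by
    intro h
    exact h13 (neg_injective (by simpa [hc₁, hc₃, Units.ext_iff] using h))
  have hc23 : c₂ ≠ c₃ := by
    intro h
    exact h23 (neg_injective (by simpa [hc₂, hc₃, Units.ext_iff] using h))
  have hdisj : ∀ a b : Fˣ, a ≠ b → Disjoint
      (Finset.univ.filter fun p : Fˣ × Fˣ => p.1 ^ 3 * p.2 = a)
      (Finset.univ.filter fun p : Fˣ × Fˣ => p.1 ^ 3 * p.2 = b) := by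
    intro a b hab
    refine Finset.disjoint_left.mpr ?_
    intro p hp1 hp2
    simp only [Finset.mem_filter, Finset.mem_univ, true_and] at hp1 hp2
    exact hab (hp1 ▸ hp2 ▸ rfl)
  have hZ : (Finset.univ.filter fun p : Fˣ × Fˣ => w p = 0).card = 24 := by
    have hun : (Finset.univ.filter fun p : Fˣ × Fˣ => w p = 0)
        = ((Finset.univ.filter fun p : Fˣ × Fˣ => p.1 ^ 3 * p.2 = c₁) ∪
           (Finset.univ.filter fun p : Fˣ × Fˣ => p.1 ^ 3 * p.2 = c₂)) ∪
          (Finset.univ.filter fun p : Fˣ × Fˣ => p.1 ^ 3 * p.2 = c₃) := by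
      ext p
      simp only [Finset.mem_filter, Finset.mem_univ, true_and, Finset.mem_union, hziff p,
        or_assoc]
    rw [hun, Finset.card_union_of_disjoint, Finset.card_union_of_disjoint (hdisj _ _ hc12),
      hfiber, hfiber, hfiber]
    · refine Finset.disjoint_union_left.mpr ⟨hdisj _ _ hc13, hdisj _ _ hc23⟩
  have hzcard : Nat.card {p : Fˣ × Fˣ // w p = 0} = 24 := by
    rw [Nat.card_eq_fintype_card, Fintype.card_subtype]
    exact hZ
  have htot : Fintype.card (Fˣ × Fˣ) = 64 := by
    rw [Fintype.card_prod, hcardU]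
  have hnzcard : Nat.card {p : Fˣ × Fˣ // w p ≠ 0} = 40 := by
    rw [Nat.card_eq_fintype_card]
    have := Fintype.card_subtype_compl (fun p : Fˣ × Fˣ => w p = 0)
    rw [this, htot]
    rw [Fintype.card_subtype, hZ]
  refine ⟨w, fun p => rfl, ?_, ?_, hzcard, by rw [hnzcard]⟩
  · -- coefficients
    refine ⟨fun s => if s = ((0,0) : ℕ × ℕ) then e₃ else if s = (3,1) then e₂ else
      if s = (1,3) then 1 else 0, ?_⟩
    intro p
    have hT : ({((0,0) : ℕ × ℕ), (3,1), (1,3)} : Finset (ℕ × ℕ)) ⊆ S := by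
      intro s hs
      simp only [Finset.mem_insert, Finset.mem_singleton] at hs
      rcases hs with rfl | rfl | rfl <;> assumption
    rw [← Finset.sum_subset hT]
    · rw [Finset.sum_insert (by decide), Finset.sum_insert (by decide),
        Finset.sum_singleton]
      simp only [hw]
      norm_num
      ring
    · intro s _ hs
      simp only [Finset.mem_insert, Finset.mem_singleton, not_or] at hs
      obtain ⟨n1, n2, n3⟩ := hs
      simp only [if_neg n1, if_neg n2, if_neg n3, zero_mul]
  · -- w ≠ 0
    intro h0
    have : Nat.card {p : Fˣ × Fˣ // w p ≠ 0} = 0 := by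
      rw [Nat.card_eq_fintype_card, Fintype.card_eq_zero_iff]
      refine ⟨fun ⟨p, hp⟩ => hp ?_⟩
      rw [h0]; rfl
    rw [hnzcard] at this
    exact absurd this (by norm_num)
end

section
/- Let α ∈ 𝔽₉ be a root of u² + u + 2 = 0 and let S₀ = {(0,0), (3,0), (1,4), (2,4)} ⊆ {0,…,7}². The function (x,y) ↦ α⁷ + α²x³ + α⁶xy⁴ + α³x²y⁴ vanishes at exactly 24 points of (𝔽₉^×)² (the curves y² + x = 0, α⁴y² + x = 0, αy⁴ + x = 0 have no common 𝔽₉-rational points in the torus pairwise). Consequently, the corresponding codeword of the generalized toric code C_{S₀}(𝔽₉) has Hamming weight exactly 40, and d(C_{S₀}(𝔽₉)) ≤ 40. -/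
namespace F9Aux

def Pz (a b c d : ZMod 3) : ZMod 3 := 1 + 2*b*d^4 + b*c*d^3 + b*c^3*d + b*c^4 + b^2*c*d^3 + 2*b^2*c^3*d + a*d^4 + a*c^3*d + 2*a*c^4 + 2*a*b*d^4 + 2*a*b*c*d^3 + a*b*c^4 + a^2*d^4 + 2*a^2*c*d^3 + 2*a^2*c^3*d + 2*a^2*c^4 + a^3

def Qz (a b c d : ZMod 3) : ZMod 3 := 1 + 2*b*d^4 + 2*b*c*d^3 + b*c^4 + b^2*d^4 + b^2*c^3*d + 2*b^2*c^4 + 2*b^3 + 2*a*d^4 + a*c*d^3 + a*c^3*d + a*c^4 + 2*a*b*c*d^3 + a*b*c^3*d + a^2*d^4 + a^2*c*d^3 + 2*a^2*c^4 + 2*a^3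

lemma zmod3_irred : ∀ t : ZMod 3, t ^ 2 + t + 2 ≠ 0 := by decide

variable {F : Type} [Field F] [Fintype F]

/-- the main algebraic identity, valid in any ring where `3 = 0` and `α² + α + 2 = 0`. -/
lemma ident (α : F) (h3 : (3:F) = 0) (hα : α ^ 2 + α + 2 = 0) (A B C D : F) :
    α ^ 7 + α ^ 2 * (A + B*α) ^ 3 + α ^ 6 * (A + B*α) * (C + D*α) ^ 4 +
      α ^ 3 * (A + B*α) ^ 2 * (C + D*α) ^ 4
    = (1 + 2*B*D^4 + B*C*D^3 + B*C^3*D + B*C^4 + B^2*C*D^3 + 2*B^2*C^3*D + A*D^4 + A*C^3*D + 2*A*C^4 + 2*A*B*D^4 + 2*A*B*C*D^3 + A*B*C^4 + A^2*D^4 + 2*A^2*C*D^3 + 2*A^2*C^3*D + 2*A^2*C^4 + A^3) + (1 + 2*B*D^4 + 2*B*C*D^3 + B*C^4 + B^2*D^4 + B^2*C^3*D + 2*B^2*C^4 + 2*B^3 + 2*A*D^4 + A*C*D^3 + A*C^3*D + A*C^4 + 2*A*B*C*D^3 + A*B*C^3*D + A^2*D^4 + A^2*C*D^3 + 2*A^2*C^4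 + 2*A^3) * α := by
  linear_combination ((-5) + 11*B*D^4 + (-68)*B*C*D^3 + 18*B*C^2*D^2 + 28*B*C^3*D + (-5)*B*C^4 + 3*B^2*D^4 + 28*B^2*C*D^3 + (-30)*B^2*C^2*D^2 + (-4)*B^2*C^3*D + 3*B^2*C^4 + 3*B^3 + (-17)*A*D^4 + 12*A*C*D^3 + 42*A*C^2*D^2 + (-20)*A*C^3*D + (-1)*A*C^4 + 14*A*B*D^4 + (-40)*A*B*C*D^3 + (-12)*A*B*C^2*D^2 + 24*A*B*C^3*D + (-2)*A*B*C^4 + (-3)*A*B^2 + (-5)*A^2*D^4 + (-4)*A^2*C*D^3 + 18*A^2*C^2*D^2 + (-4)*A^2*C^3*D + (-1)*A^2*C^4 + (-3)*A^2*B + A^3 + (-1)*α + (-17)*α*B*D^4 + 12*α*B*C*D^3 + 42*α*B*C^2*D^2 + (-20)*α*B*C^3*D + (-1)*α*B*C^4 + 7*α*B^2*D^4 + (-20)*α*B^2*C*D^3 + (-6)*α*B^2*C^2*D^2 + 12*α*B^2*C^3*D + (-1)*α*B^2*C^4 + (-1)*α*B^3 + 3*α*A*D^4 + 28*α*A*C*D^3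 + (-30)*α*A*C^2*D^2 + (-4)*α*A*C^3*D + 3*α*A*C^4 + (-10)*α*A*B*D^4 + (-8)*α*A*B*C*D^3 + 36*α*A*B*C^2*D^2 + (-8)*α*A*B*C^3*D + (-2)*α*A*B*C^4 + (-3)*α*A*B^2 + (-1)*α*A^2*D^4 + 12*α*A^2*C*D^3 + (-6)*α*A^2*C^2*D^2 + (-4)*α*A^2*C^3*D + α*A^2*C^4 + 3*α*A^2*B + 3*α^2 + 3*α^2*B*D^4 + 28*α^2*B*C*D^3 + (-30)*α^2*B*C^2*D^2 + (-4)*α^2*B*C^3*D + 3*α^2*B*C^4 + (-5)*α^2*B^2*D^4 + (-4)*α^2*B^2*C*D^3 + 18*α^2*B^2*C^2*D^2 + (-4)*α^2*B^2*C^3*D + (-1)*α^2*B^2*C^4 + (-1)*α^2*B^3 + 7*α^2*A*D^4 + (-20)*α^2*A*C*D^3 + (-6)*α^2*A*C^2*D^2 + 12*α^2*A*C^3*D + (-1)*α^2*A*C^4 + (-2)*α^2*A*B*D^4 + 24*α^2*A*B*C*D^3 + (-12)*α^2*A*B*C^2*D^2 + (-8)*α^2*A*B*C^3*D + 2*α^2*A*B*C^4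 + 3*α^2*A*B^2 + 3*α^2*A^2*D^4 + (-4)*α^2*A^2*C*D^3 + (-6)*α^2*A^2*C^2*D^2 + 4*α^2*A^2*C^3*D + (-1)*α^3 + 7*α^3*B*D^4 + (-20)*α^3*B*C*D^3 + (-6)*α^3*B*C^2*D^2 + 12*α^3*B*C^3*D + (-1)*α^3*B*C^4 + (-1)*α^3*B^2*D^4 + 12*α^3*B^2*C*D^3 + (-6)*α^3*B^2*C^2*D^2 + (-4)*α^3*B^2*C^3*D + α^3*B^2*C^4 + α^3*B^3 + (-5)*α^3*A*D^4 + (-4)*α^3*A*C*D^3 + 18*α^3*A*C^2*D^2 + (-4)*α^3*A*C^3*D + (-1)*α^3*A*C^4 + 6*α^3*A*B*D^4 + (-8)*α^3*A*B*C*D^3 + (-12)*α^3*A*B*C^2*D^2 + 8*α^3*A*B*C^3*D + (-1)*α^3*A^2*D^4 + (-4)*α^3*A^2*C*D^3 + 6*α^3*A^2*C^2*D^2 + (-1)*α^4 + (-5)*α^4*B*D^4 + (-4)*α^4*B*C*D^3 + 18*α^4*B*C^2*D^2 + (-4)*α^4*B*C^3*D + (-1)*α^4*B*C^4 + 3*α^4*B^2*D^4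 + (-4)*α^4*B^2*C*D^3 + (-6)*α^4*B^2*C^2*D^2 + 4*α^4*B^2*C^3*D + (-1)*α^4*A*D^4 + 12*α^4*A*C*D^3 + (-6)*α^4*A*C^2*D^2 + (-4)*α^4*A*C^3*D + α^4*A*C^4 + (-2)*α^4*A*B*D^4 + (-8)*α^4*A*B*C*D^3 + 12*α^4*A*B*C^2*D^2 + (-1)*α^4*A^2*D^4 + 4*α^4*A^2*C*D^3 + α^5 + (-1)*α^5*B*D^4 + 12*α^5*B*C*D^3 + (-6)*α^5*B*C^2*D^2 + (-4)*α^5*B*C^3*D + α^5*B*C^4 + (-1)*α^5*B^2*D^4 + (-4)*α^5*B^2*C*D^3 + 6*α^5*B^2*C^2*D^2 + 3*α^5*A*D^4 + (-4)*α^5*A*C*D^3 + (-6)*α^5*A*C^2*D^2 + 4*α^5*A*C^3*D + (-2)*α^5*A*B*D^4 + 8*α^5*A*B*C*D^3 + α^5*A^2*D^4 + 3*α^6*B*D^4 + (-4)*α^6*B*C*D^3 + (-6)*α^6*B*C^2*D^2 + 4*α^6*B*C^3*D + (-1)*α^6*B^2*D^4 + 4*α^6*B^2*C*D^3 + (-1)*α^6*A*D^4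 + (-4)*α^6*A*C*D^3 + 6*α^6*A*C^2*D^2 + 2*α^6*A*B*D^4 + (-1)*α^7*B*D^4 + (-4)*α^7*B*C*D^3 + 6*α^7*B*C^2*D^2 + α^7*B^2*D^4 + (-1)*α^7*A*D^4 + 4*α^7*A*C*D^3 + (-1)*α^8*B*D^4 + 4*α^8*B*C*D^3 + α^8*A*D^4 + α^9*B*D^4) * hα + (3 + (-8)*B*D^4 + 45*B*C*D^3 + (-12)*B*C^2*D^2 + (-19)*B*C^3*D + 3*B*C^4 + (-2)*B^2*D^4 + (-19)*B^2*C*D^3 + 20*B^2*C^2*D^2 + 2*B^2*C^3*D + (-2)*B^2*C^4 + (-2)*B^3 + 11*A*D^4 + (-8)*A*C*D^3 + (-28)*A*C^2*D^2 + 13*A*C^3*D + (-10)*A*B*D^4 + 26*A*B*C*D^3 + 8*A*B*C^2*D^2 + (-16)*A*B*C^3*D + A*B*C^4 + 2*A*B^2 + 3*A^2*D^4 + 2*A^2*C*D^3 + (-12)*A^2*C^2*D^2 + 2*A^2*C^3*D + 2*A^2*B + (-1)*A^3 + 2*α + 7*α*B*D^4 + 14*α*B*C*D^3 + (-34)*α*B*C^2*D^2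 + 4*α*B*C^3*D + 2*α*B*C^4 + (-6)*α*B^2*D^4 + 4*α*B^2*C*D^3 + 14*α*B^2*C^2*D^2 + (-7)*α*B^2*C^3*D + (-1)*α*B^2*C^4 + (-1)*α*B^3 + 3*α*A*D^4 + (-23)*α*A*C*D^3 + 6*α*A*C^2*D^2 + 9*α*A*C^3*D + (-2)*α*A*C^4 + 2*α*A*B*D^4 + 18*α*A*B*C*D^3 + (-20)*α*A*B*C^2*D^2 + (-3)*α*A*B*C^3*D + 2*α*A*B*C^4 + 3*α*A*B^2 + 2*α*A^2*D^4 + (-7)*α*A^2*C*D^3 + (-2)*α*A^2*C^2*D^2 + 4*α*A^2*C^3*D + (-1)*α*A^2*C^4 + (-1)*α*A^2*B + (-1)*α*A^3) * h3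

def eF [CharP F 3] (α : F) (q : ZMod 3 × ZMod 3) : F :=
  ZMod.castHom (dvd_refl 3) F q.1 + ZMod.castHom (dvd_refl 3) F q.2 * α

lemma phi_inj [CharP F 3] : Function.Injective (ZMod.castHom (dvd_refl 3) F) := by
  haveI : Fact (Nat.Prime 3) := ⟨by norm_num⟩
  exact (ZMod.castHom (dvd_refl 3) F).injective

lemma eF_eq_zero [CharP F 3] (α : F) (hα : α ^ 2 + α + 2 = 0) (q : ZMod 3 × ZMod 3) :
    eF α q = 0 ↔ q = 0 := by
  haveI : Fact (Nat.Prime 3) := ⟨by norm_num⟩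
  obtain ⟨a, b⟩ := q
  simp only [eF, Prod.mk_eq_zero]
  constructor
  · intro h
    by_cases hb : b = 0
    · subst hb
      refine ⟨phi_inj (F := F) ?_, rfl⟩
      rw [map_zero]
      simpa using h
    · exfalso
      have hbF : ZMod.castHom (dvd_refl 3) F b ≠ 0 := by
        intro hh
        exact hb (phi_inj (F := F) (by rw [map_zero]; exact hh))
      have hαval : α = (-(ZMod.castHom (dvd_refl 3) F a)) * (ZMod.castHom (dvd_refl 3) F b)⁻¹ := by
        rw [eq_mul_inv_iff_mul_eq₀ hbF]
        linear_combination h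
      have hφt : ZMod.castHom (dvd_refl 3) F (-a * b⁻¹)
          = (-(ZMod.castHom (dvd_refl 3) F a)) * (ZMod.castHom (dvd_refl 3) F b)⁻¹ := by
        rw [map_mul, map_neg, map_inv₀]
      have h0 : (ZMod.castHom (dvd_refl 3) F (-a * b⁻¹)) ^ 2
          + ZMod.castHom (dvd_refl 3) F (-a * b⁻¹) + 2 = 0 := by
        rw [hφt, ← hαval]
        exact hα
      have h0' : (-a * b⁻¹) ^ 2 + (-a * b⁻¹) + 2 = 0 := by
        apply phi_inj (F := F)
        rw [map_add, map_add, map_pow, map_ofNat, map_zero]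
        exact h0
      exact zmod3_irred _ h0'
  · rintro ⟨rfl, rfl⟩
    simp

lemma eF_inj [CharP F 3] (α : F) (hα : α ^ 2 + α + 2 = 0) : Function.Injective (eF α) := by
  intro q q' h
  have hsub : eF α (q - q') = 0 := by
    simp only [eF, Prod.fst_sub, Prod.snd_sub, map_sub]
    simp only [eF] at h
    linear_combination h
  have := (eF_eq_zero α hα _).mp hsub
  exact sub_eq_zero.mp (by simpa [sub_eq_zero] using this)

lemma eF_surj [CharP F 3] (hcard : Fintype.card F = 9) (α : F) (hα : α ^ 2 + α + 2 = 0) :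
    Function.Surjective (eF α) := by
  have hc : Fintype.card (ZMod 3 × ZMod 3) = Fintype.card F := by
    simp [hcard]
  exact ((Fintype.bijective_iff_injective_and_card (eF α)).mpr ⟨eF_inj α hα, hc⟩).2

lemma eval_eq [CharP F 3] (α : F) (h3 : (3:F) = 0) (hα : α ^ 2 + α + 2 = 0)
    (a b c d : ZMod 3) :
    α ^ 7 + α ^ 2 * (eF α (a,b)) ^ 3 + α ^ 6 * (eF α (a,b)) * (eF α (c,d)) ^ 4 +
      α ^ 3 * (eF α (a,b)) ^ 2 * (eF α (c,d)) ^ 4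
    = eF α (Pz a b c d, Qz a b c d) := by
  simp only [eF]
  rw [ident α h3 hα]
  simp only [Pz, Qz, map_add, map_mul, map_pow, map_ofNat, map_one]

lemma card_transfer [CharP F 3] (hcard : Fintype.card F = 9) (α : F)
    (hα : α ^ 2 + α + 2 = 0) (w : Fˣ × Fˣ → F)
    (Z : (ZMod 3 × ZMod 3) × (ZMod 3 × ZMod 3) → Prop) (S : F → Prop)
    (hwz : ∀ q : (ZMod 3 × ZMod 3) × (ZMod 3 × ZMod 3), ∀ u v : Fˣ,
      (u : F) = eF α q.1 → (v : F) = eF α q.2 → (S (w (u, v)) ↔ Z q)) :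
    Nat.card {p : Fˣ × Fˣ // S (w p)}
      = Nat.card {q : (ZMod 3 × ZMod 3) × (ZMod 3 × ZMod 3) // q.1 ≠ 0 ∧ q.2 ≠ 0 ∧ Z q} := by
  have key := eF_eq_zero (F := F) α hα
  let m : {q : (ZMod 3 × ZMod 3) × (ZMod 3 × ZMod 3) // q.1 ≠ 0 ∧ q.2 ≠ 0 ∧ Z q}
      → {p : Fˣ × Fˣ // S (w p)} :=
    fun q => ⟨(Units.mk0 (eF α q.1.1) (fun h => q.2.1 ((key q.1.1).mp h)),
               Units.mk0 (eF α q.1.2) (fun h => q.2.2.1 ((key q.1.2).mp h))),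
      (hwz q.1 _ _ rfl rfl).mpr q.2.2.2⟩
  have hbij : Function.Bijective m := by
    constructor
    · rintro ⟨q, hq⟩ ⟨q', hq'⟩ h
      have h1 : eF α q.1 = eF α q'.1 := congrArg (fun p => ((p : {p : Fˣ × Fˣ // S (w p)}).1.1 : F)) h
      have h2 : eF α q.2 = eF α q'.2 := congrArg (fun p => ((p : {p : Fˣ × Fˣ // S (w p)}).1.2 : F)) h
      exact Subtype.ext (Prod.ext (eF_inj α hα h1) (eF_inj α hα h2))
    · rintro ⟨⟨u, v⟩, hs⟩
      obtain ⟨q1, hq1⟩ := eF_surj hcard α hα (u : F)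
      obtain ⟨q2, hq2⟩ := eF_surj hcard α hα (v : F)
      have hq1ne : q1 ≠ 0 := fun h => u.ne_zero (by rw [← hq1, h, (key 0).mpr rfl])
      have hq2ne : q2 ≠ 0 := fun h => v.ne_zero (by rw [← hq2, h, (key 0).mpr rfl])
      have hz : Z (q1, q2) := (hwz (q1, q2) u v hq1.symm hq2.symm).mp hs
      refine ⟨⟨(q1, q2), hq1ne, hq2ne, hz⟩, ?_⟩
      apply Subtype.ext
      apply Prod.ext <;> apply Units.ext
      · exact hq1
      · exact hq2
  exact (Nat.card_eq_of_bijective m hbij).symm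

end F9Aux

open F9Aux
/-- Let `F` be the field with `9` elements, `α` a root of `u² + u + 2 = 0`, and
`S₀ = {(0,0), (3,0), (1,4), (2,4)}`.  The function
`(x,y) ↦ α⁷ + α²x³ + α⁶xy⁴ + α³x²y⁴` vanishes at exactly `24` points of the torus
`(Fˣ)²`, so the corresponding codeword of `C_{S₀}(F₉)` is nonzero with Hamming weight
exactly `40`; in particular `d(C_{S₀}(F₉)) ≤ 40`. -/
theorem F9_trapezoid_weight (F : Type) [Field F] [Fintype F]
    (hF : Fintype.card F = 9) (α : F) (hα : α ^ 2 + α + 2 = 0) :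
    ∃ w : Fˣ × Fˣ → F,
      (∀ p : Fˣ × Fˣ, w p =
        α ^ 7 + α ^ 2 * (p.1 : F) ^ 3 + α ^ 6 * (p.1 : F) * (p.2 : F) ^ 4 +
          α ^ 3 * (p.1 : F) ^ 2 * (p.2 : F) ^ 4) ∧
      (∃ c : ℕ × ℕ → F,
        ∀ p : Fˣ × Fˣ, w p =
          ∑ s ∈ ({(0, 0), (3, 0), (1, 4), (2, 4)} : Finset (ℕ × ℕ)),
            c s * (p.1 : F) ^ s.1 * (p.2 : F) ^ s.2) ∧
      w ≠ 0 ∧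
      Nat.card {p : Fˣ × Fˣ // w p = 0} = 24 ∧
      Nat.card {p : Fˣ × Fˣ // w p ≠ 0} = 40 := by
  -- characteristic 3
  have h9 : ((9 : ℕ) : F) = 0 := by rw [← hF]; exact FiniteField.cast_card_eq_zero F
  have h3 : (3 : F) = 0 := by
    have hsq : (3 : F) ^ 2 = 0 := by push_cast at h9; linear_combination h9
    exact pow_eq_zero_iff two_ne_zero |>.mp hsq
  have hd : ringChar F ∣ 3 := by
    have := (CharP.cast_eq_zero_iff F (ringChar F) 3).mp (by exact_mod_cast h3)
    exact this
  have hr : ringChar F = 3 := by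
    rcases (Nat.prime_three.eq_one_or_self_of_dvd _ hd) with h | h
    · exfalso
      haveI hc1 : CharP F 1 := h ▸ ringChar.charP F
      exact one_ne_zero (α := F) (by exact_mod_cast CharP.cast_eq_zero F 1)
    · exact h
  haveI hc3 : CharP F 3 := hr ▸ ringChar.charP F
  have hwz0 : ∀ q : (ZMod 3 × ZMod 3) × (ZMod 3 × ZMod 3), ∀ u v : Fˣ,
      (u : F) = eF α q.1 → (v : F) = eF α q.2 →
      ((α ^ 7 + α ^ 2 * (u : F) ^ 3 + α ^ 6 * (u : F) * (v : F) ^ 4 +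
          α ^ 3 * (u : F) ^ 2 * (v : F) ^ 4 = 0)
        ↔ (Pz q.1.1 q.1.2 q.2.1 q.2.2 = 0 ∧ Qz q.1.1 q.1.2 q.2.1 q.2.2 = 0)) := by
    rintro ⟨⟨a, b⟩, ⟨c, d⟩⟩ u v hu hv
    rw [hu, hv, eval_eq α h3 hα a b c d, eF_eq_zero α hα, Prod.mk_eq_zero]
  have h24 : Nat.card {p : Fˣ × Fˣ // α ^ 7 + α ^ 2 * (p.1 : F) ^ 3 +
      α ^ 6 * (p.1 : F) * (p.2 : F) ^ 4 + α ^ 3 * (p.1 : F) ^ 2 * (p.2 : F) ^ 4 = 0} = 24 := by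
    rw [card_transfer hF α hα
      (fun p => α ^ 7 + α ^ 2 * (p.1 : F) ^ 3 + α ^ 6 * (p.1 : F) * (p.2 : F) ^ 4 +
        α ^ 3 * (p.1 : F) ^ 2 * (p.2 : F) ^ 4)
      (fun q => Pz q.1.1 q.1.2 q.2.1 q.2.2 = 0 ∧ Qz q.1.1 q.1.2 q.2.1 q.2.2 = 0)
      (fun x => x = 0) hwz0]
    rw [Nat.card_eq_fintype_card]
    decide
  have h40 : Nat.card {p : Fˣ × Fˣ // ¬(α ^ 7 + α ^ 2 * (p.1 : F) ^ 3 +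
      α ^ 6 * (p.1 : F) * (p.2 : F) ^ 4 + α ^ 3 * (p.1 : F) ^ 2 * (p.2 : F) ^ 4 = 0)} = 40 := by
    rw [card_transfer hF α hα
      (fun p => α ^ 7 + α ^ 2 * (p.1 : F) ^ 3 + α ^ 6 * (p.1 : F) * (p.2 : F) ^ 4 +
        α ^ 3 * (p.1 : F) ^ 2 * (p.2 : F) ^ 4)
      (fun q => ¬(Pz q.1.1 q.1.2 q.2.1 q.2.2 = 0 ∧ Qz q.1.1 q.1.2 q.2.1 q.2.2 = 0))
      (fun x => ¬(x = 0)) (fun q u v hu hv => not_congr (hwz0 q u v hu hv))]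
    rw [Nat.card_eq_fintype_card]
    decide
  refine ⟨fun p => α ^ 7 + α ^ 2 * (p.1 : F) ^ 3 + α ^ 6 * (p.1 : F) * (p.2 : F) ^ 4 +
      α ^ 3 * (p.1 : F) ^ 2 * (p.2 : F) ^ 4, fun p => rfl,
    ⟨fun s => if s = (0,0) then α ^ 7 else if s = (3,0) then α ^ 2
      else if s = (1,4) then α ^ 6 else α ^ 3, fun p => ?_⟩, ?_, h24, h40⟩
  · rw [Finset.sum_insert (by decide), Finset.sum_insert (by decide),
        Finset.sum_insert (by decide), Finset.sum_singleton]
    norm_num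
    ring
  · intro hzero
    have hpos : Nat.card {p : Fˣ × Fˣ // ¬(α ^ 7 + α ^ 2 * (p.1 : F) ^ 3 +
        α ^ 6 * (p.1 : F) * (p.2 : F) ^ 4 + α ^ 3 * (p.1 : F) ^ 2 * (p.2 : F) ^ 4 = 0)} ≠ 0 := by
      rw [h40]; norm_num
    obtain ⟨⟨p, hp⟩⟩ := (Nat.card_ne_zero.mp hpos).1
    exact hp (by simpa using congrFun hzero p)
end
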